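/- arXiv:2406.19748 — 10 statements merged into one kernel-verified Lean document; each statement's English description precedes it below -/
import Mathlib

section
/- Let L/K be a field extension. Then the following are equivalent: (ii) for every positive integer N there exists an element α ∈ L such that the degree [K(α):K] of the intermediate field K(α) over K is at least N (or infinite); (iii) L/K is strictly infinite. -/
open IntermediateField Polynomial

section StrictlyInfiniteAux
variable {K L : Type*} [Field K] [Field L] [Algebra K L]

private lemma SIF.fd_of_rank_lt {α : L} {N : ℕ}
    (h : Module.rank K (IntermediateField.adjoin K ({α} : Set L)) < N) :
    FiniteDimensional K (IntermediateField.adjoin K ({α} : Set L)) :=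
  Module.rank_lt_aleph0_iff.1 (h.trans (Cardinal.nat_lt_aleph0 N))

private lemma SIF.finrank_lt_of_rank_lt {α : L} {N : ℕ}
    (h : Module.rank K (IntermediateField.adjoin K ({α} : Set L)) < N) :
    Module.finrank K (IntermediateField.adjoin K ({α} : Set L)) < N := by
  haveI := SIF.fd_of_rank_lt h
  rwa [← Module.finrank_eq_rank, Nat.cast_lt] at h

private lemma SIF.integral_of_rank_lt {α : L} {N : ℕ}
    (h : Module.rank K (IntermediateField.adjoin K ({α} : Set L)) < N) :
    IsIntegral K α := by
  haveI := SIF.fd_of_rank_lt h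
  have : IsIntegral K (⟨α, IntermediateField.mem_adjoin_simple_self K α⟩ : K⟮α⟯) :=
    IsIntegral.of_finite K _
  exact (isIntegral_algebraMap_iff (algebraMap K⟮α⟯ L).injective).2 this

private lemma SIF.isSeparable_pow {x : L} (hx : IsSeparable K x) (n : ℕ) :
    IsSeparable K (x ^ n) := by
  haveI : Algebra.IsSeparable K K⟮x⟯ :=
    (IntermediateField.isSeparable_adjoin_simple_iff_isSeparable K L).2 hx
  have hz : IsSeparable K (IntermediateField.AdjoinSimple.gen K x ^ n) :=
    Algebra.IsSeparable.isSeparable K _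
  have : x ^ n = algebraMap K⟮x⟯ L (IntermediateField.AdjoinSimple.gen K x ^ n) := by
    push_cast; rfl
  rw [IsSeparable, this, minpoly.algebraMap_eq (algebraMap K⟮x⟯ L).injective]
  exact hz

/-- If an element has degree `< N ≤ p^r` over `K` of characteristic `p`, then its `p^r`-th
power is separable over `K`. -/
private lemma SIF.isSeparable_pow_char {p : ℕ} (hp : p.Prime) [CharP K p] {N r : ℕ}
    (hNr : N ≤ p ^ r) {y : L} (hyint : IsIntegral K y)
    (hdeg : Module.finrank K (IntermediateField.adjoin K ({y} : Set L)) < N) :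
    IsSeparable K (y ^ p ^ r) := by
  haveI : ExpChar K p := .prime hp
  obtain ⟨g, hgsep, m, hgf⟩ := (minpoly.irreducible hyint).hasSeparableContraction p
  have h0 : Polynomial.aeval (y ^ p ^ m) g = 0 := by
    rw [← Polynomial.expand_aeval, hgf, minpoly.aeval]
  have hsep : IsSeparable K (y ^ p ^ m) := hgsep.of_dvd (minpoly.dvd K _ h0)
  have hdvd : p ^ m ∣ (minpoly K y).natDegree := by
    rw [← hgf, Polynomial.natDegree_expand]
    exact ⟨g.natDegree, mul_comm _ _⟩
  have hdlt : (minpoly K y).natDegree < N := by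
    rwa [← IntermediateField.adjoin.finrank hyint]
  have hpm : p ^ m ≤ p ^ r :=
    le_trans (le_trans (Nat.le_of_dvd (minpoly.natDegree_pos hyint) hdvd) hdlt.le) hNr
  have hmr : m ≤ r := (Nat.pow_le_pow_iff_right hp.one_lt).1 hpm
  have : y ^ p ^ r = (y ^ p ^ m) ^ p ^ (r - m) := by
    rw [← pow_mul, ← pow_add, Nat.add_sub_cancel' hmr]
  rw [this]
  exact SIF.isSeparable_pow hsep _

/-- If all simple subextensions have rank `< N`, there is a separable element whose simple
adjoin contains all separable elements. -/
private lemma SIF.exists_max_sep {N : ℕ}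
    (h : ∀ α : L, Module.rank K (IntermediateField.adjoin K ({α} : Set L)) < N) :
    ∃ α : L, IsSeparable K α ∧
      ∀ β : L, IsSeparable K β → β ∈ IntermediateField.adjoin K ({α} : Set L) := by
  set D : Set ℕ := {n | ∃ α : L, IsSeparable K α ∧
    n = Module.finrank K (IntermediateField.adjoin K ({α} : Set L))} with hD
  have hne : D.Nonempty := by
    refine ⟨_, 0, ?_, rfl⟩
    rw [IsSeparable, minpoly.zero]
    exact Polynomial.separable_X
  have hbdd : BddAbove D := ⟨N, by rintro n ⟨α, -, rfl⟩; exact (SIF.finrank_lt_of_rank_lt (h α)).le⟩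
  obtain ⟨α, hαsep, hα⟩ := Nat.sSup_mem hne hbdd
  refine ⟨α, hαsep, fun β hβsep => ?_⟩
  set E := IntermediateField.adjoin K ({α, β} : Set L) with hE
  haveI : FiniteDimensional K E :=
    IntermediateField.finiteDimensional_adjoin (by
      rintro x hx
      rcases hx with rfl | hx
      · exact hαsep.isIntegral
      · rw [Set.mem_singleton_iff] at hx; subst hx; exact hβsep.isIntegral)
  haveI : Algebra.IsSeparable K E :=
    IntermediateField.isSeparable_adjoin_pair_of_isSeparable K L hαsep hβsep
  obtain ⟨γ, hγ⟩ := Field.exists_primitive_element K E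
  have hγint : IsIntegral K γ := IsIntegral.of_finite K γ
  have hmp : minpoly K ((γ : L)) = minpoly K γ :=
    minpoly.algebraMap_eq (algebraMap E L).injective γ
  have hγLsep : IsSeparable K (γ : L) := by
    rw [IsSeparable, hmp]; exact Algebra.IsSeparable.isSeparable K γ
  have hγLint : IsIntegral K (γ : L) :=
    (isIntegral_algebraMap_iff (algebraMap E L).injective).2 hγint
  have h1 : Module.finrank K (IntermediateField.adjoin K ({(γ : L)} : Set L)) =
      Module.finrank K E := by
    rw [IntermediateField.adjoin.finrank hγLint, hmp,
      ← IntermediateField.adjoin.finrank hγint, hγ, IntermediateField.finrank_top']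
  have hle : IntermediateField.adjoin K ({α} : Set L) ≤ E :=
    IntermediateField.adjoin.mono _ _ _ (by simp)
  have h2 : Module.finrank K (IntermediateField.adjoin K ({α} : Set L)) ≤
      Module.finrank K E :=
    LinearMap.finrank_le_finrank_of_injective
      (f := (IntermediateField.inclusion hle).toLinearMap)
      (IntermediateField.inclusion_injective hle)
  have h3 : Module.finrank K E ≤ sSup D := le_csSup hbdd ⟨(γ : L), hγLsep, h1.symm⟩
  have h4 : E = IntermediateField.adjoin K ({α} : Set L) :=
    (IntermediateField.eq_of_le_of_finrank_eq hle (le_antisymm (hα ▸ h2) (hα ▸ h3))).symm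
  rw [← h4]
  exact IntermediateField.subset_adjoin _ _ (by simp)

end StrictlyInfiniteAux

/-- A field extension `L/K` is *essentially finite* if either `char K = 0` and `L/K` is
finite, or `char K = p > 0`, `L/K` is algebraic, and there exists `r : ℕ` such that the
intermediate field `L^{p^r}K` generated over `K` by the `p^r`-th powers of all elements of `L`
is finite over `K`. -/
def EssentiallyFinite (K L : Type*) [Field K] [Field L] [Algebra K L] : Prop :=
  (CharP K 0 ∧ FiniteDimensional K L) ∨
    ∃ p : ℕ, p.Prime ∧ CharP K p ∧ Algebra.IsAlgebraic K L ∧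
      ∃ r : ℕ, FiniteDimensional K
        (IntermediateField.adjoin K (Set.range fun y : L => y ^ p ^ r))

/-- A field extension `L/K` is *strictly infinite* if it is not essentially finite.
For every positive integer `N` there exists `α ∈ L` with `[K(α):K] ≥ N` (or infinite)
if and only if `L/K` is strictly infinite. -/
theorem strictlyInfinite_iff_exists_large_degree
    (K L : Type*) [Field K] [Field L] [Algebra K L] :
    (∀ N : ℕ, 0 < N → ∃ α : L,
      (N : Cardinal) ≤ Module.rank K (IntermediateField.adjoin K ({α} : Set L))) ↔
    ¬ EssentiallyFinite K L := by
  constructor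
  · rintro hall (⟨h0, hfd⟩ | ⟨p, hp, hcp, halg, r, hfdM⟩)
    · obtain ⟨α, hα⟩ := hall (Module.finrank K L + 1) (Nat.succ_pos _)
      have h1 : Module.rank K (IntermediateField.adjoin K ({α} : Set L)) ≤ Module.rank K L :=
        Submodule.rank_le (Subalgebra.toSubmodule (IntermediateField.adjoin K
          ({α} : Set L)).toSubalgebra)
      have h2 := hα.trans h1
      rw [← Module.finrank_eq_rank, Nat.cast_le] at h2
      omega
    · set M := IntermediateField.adjoin K (Set.range fun y : L => y ^ p ^ r) with hM
      obtain ⟨α, hα⟩ := hall (p ^ r * Module.finrank K M + 1) (Nat.succ_pos _)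
      have hint : IsIntegral K α := (halg.isAlgebraic α).isIntegral
      have hmem : α ^ p ^ r ∈ M := IntermediateField.subset_adjoin _ _ ⟨α, rfl⟩
      have hintM : IsIntegral M α := hint.tower_top
      set F := IntermediateField.adjoin (↥M) ({α} : Set L) with hF
      haveI : FiniteDimensional ↥M F := IntermediateField.adjoin.finiteDimensional hintM
      have hdegF : Module.finrank ↥M F ≤ p ^ r := by
        rw [hF, IntermediateField.adjoin.finrank hintM]
        have hpr : p ^ r ≠ 0 := pow_ne_zero _ hp.pos.ne'
        have hne : (X ^ p ^ r - C (⟨α ^ p ^ r, hmem⟩ : ↥M) : Polynomial ↥M) ≠ 0 :=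
          (Polynomial.monic_X_pow_sub_C _ hpr).ne_zero
        have haev : Polynomial.aeval α
            (X ^ p ^ r - C (⟨α ^ p ^ r, hmem⟩ : ↥M) : Polynomial ↥M) = 0 := by
          rw [map_sub, Polynomial.aeval_X_pow, Polynomial.aeval_C]
          exact sub_self _
        have := minpoly.degree_le_of_ne_zero (↥M) α hne haev
        have hnd := Polynomial.natDegree_le_natDegree this
        rwa [Polynomial.natDegree_X_pow_sub_C] at hnd
      haveI : FiniteDimensional K F := FiniteDimensional.trans K (↥M) F
      have hsub : ∀ x ∈ IntermediateField.adjoin K ({α} : Set L), x ∈ F := by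
        have hαF : α ∈ F := IntermediateField.subset_adjoin _ _ rfl
        intro x hx
        have hle : IntermediateField.adjoin K ({α} : Set L) ≤
            IntermediateField.restrictScalars K F :=
          IntermediateField.adjoin_le_iff.2 (Set.singleton_subset_iff.2 hαF)
        exact hle hx
      let f : (IntermediateField.adjoin K ({α} : Set L)) →ₗ[K] F :=
        { toFun := fun x => ⟨x.1, hsub x.1 x.2⟩
          map_add' := fun _ _ => rfl
          map_smul' := fun _ _ => rfl }
      have hinj : Function.Injective f := by
        intro a b hab
        have h5 : (f a).1 = (f b).1 := congrArg Subtype.val hab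
        exact Subtype.ext h5
      have hrank : Module.rank K (IntermediateField.adjoin K ({α} : Set L)) ≤
          Module.rank K F := LinearMap.rank_le_of_injective f hinj
      have h2 := hα.trans hrank
      rw [← Module.finrank_eq_rank, Nat.cast_le] at h2
      have h3 : Module.finrank K M * Module.finrank (↥M) F = Module.finrank K F :=
        Module.finrank_mul_finrank K (↥M) F
      have h4 : Module.finrank K F ≤ Module.finrank K M * p ^ r := by
        rw [← h3]; exact Nat.mul_le_mul_left _ hdegF
      have := h2.trans h4
      rw [mul_comm] at this
      omega
  · intro hEF
    by_contra hno
    apply hEF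
    push_neg at hno
    obtain ⟨N, hN, h⟩ := hno
    have hint : ∀ α : L, IsIntegral K α := fun α => SIF.integral_of_rank_lt (h α)
    haveI halg : Algebra.IsAlgebraic K L := ⟨fun x => (hint x).isAlgebraic⟩
    obtain ⟨α₀, hα₀sep, hmax⟩ := SIF.exists_max_sep h
    haveI : FiniteDimensional K (IntermediateField.adjoin K ({α₀} : Set L)) :=
      SIF.fd_of_rank_lt (h α₀)
    rcases CharP.char_is_prime_or_zero K (ringChar K) with hp | h0
    · haveI := ringChar.charP K
      refine Or.inr ⟨ringChar K, hp, ringChar.charP K, halg, N, ?_⟩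
      have hNr : N ≤ ringChar K ^ N := (Nat.lt_pow_self hp.one_lt : N < ringChar K ^ N).le
      have hle : IntermediateField.adjoin K (Set.range fun y : L => y ^ ringChar K ^ N) ≤
          IntermediateField.adjoin K ({α₀} : Set L) := by
        rw [IntermediateField.adjoin_le_iff]
        rintro _ ⟨y, rfl⟩
        exact hmax _ (SIF.isSeparable_pow_char hp hNr (hint y)
          (SIF.finrank_lt_of_rank_lt (h y)))
      exact FiniteDimensional.of_injective (IntermediateField.inclusion hle).toLinearMap
        (IntermediateField.inclusion_injective hle)
    · haveI : CharP K 0 := h0 ▸ ringChar.charP K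
      haveI : CharZero K := CharP.charP_to_charZero K
      have htop : IntermediateField.adjoin K ({α₀} : Set L) = ⊤ :=
        eq_top_iff.2 fun β _ => hmax β (minpoly.irreducible (hint β)).separable
      have hfd : FiniteDimensional K (⊤ : IntermediateField K L) := htop ▸ ‹_›
      exact Or.inl ⟨‹_›, IntermediateField.topEquiv.toLinearEquiv.finiteDimensional⟩
end

section
/- Let L/K be a field extension. Assume that there exists a perfect subfield F ⊆ K such that K has finite transcendence degree over F and K is separably generated over F, i.e., there exist algebraically independent elements t_1,…,t_m ∈ K over F such that K is an algebraic separable extension of F(t_1,…,t_m). Then L/K is strictly infinite if and only if L/K is infinite (i.e., [L:K] is not finite). -/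
set_option maxHeartbeats 1000000
set_option synthInstance.maxHeartbeats 400000

open IntermediateField in
/-- If `K` is separably generated (with finite transcendence degree) over a perfect
subfield `F`, then `K` is finite over the subfield `K^{p^r}` of `p^r`-th powers. -/
theorem aux_finiteDimensional_fieldRange_iterateFrobenius
    {F K : Type*} [Field F] [Field K] [Algebra F K] [PerfectField F]
    {m : ℕ} {t : Fin m → K}
    (hsep : Algebra.IsSeparable (IntermediateField.adjoin F (Set.range t)) K)
    (p : ℕ) (hp : p.Prime) [ExpChar K p] (r : ℕ) :
    FiniteDimensional ((iterateFrobenius K p r).fieldRange) K := by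
  haveI : Fact p.Prime := ⟨hp⟩
  haveI : CharP K p := by
    obtain (_ | _) := ‹ExpChar K p›
    · exact absurd hp Nat.not_prime_one
    · assumption
  set Kr : Subfield K := (iterateFrobenius K p r).fieldRange with hKr
  have hpow : ∀ x : K, x ^ p ^ r ∈ Kr := fun x => ⟨x, rfl⟩
  have hint : ∀ x ∈ Set.range t, IsIntegral Kr x := by
    rintro _ ⟨i, rfl⟩
    refine ⟨Polynomial.X ^ p ^ r - Polynomial.C ⟨t i ^ p ^ r, hpow _⟩,
      Polynomial.monic_X_pow_sub_C _ (pow_ne_zero r hp.ne_zero), ?_⟩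
    have : (algebraMap Kr K) ⟨t i ^ p ^ r, hpow _⟩ = t i ^ p ^ r := rfl
    simp [sub_eq_zero, this]
  haveI := (Set.finite_range t).to_subtype
  haveI hfd : FiniteDimensional Kr (adjoin Kr (Set.range t)) :=
    finiteDimensional_adjoin hint
  have htop : adjoin Kr (Set.range t) = ⊤ := by
    rw [eq_top_iff]
    rintro x -
    set K₀ := IntermediateField.adjoin F (Set.range t)
    haveI : CharP K₀ p := (Algebra.charP_iff K₀ K p).mpr ‹_›
    haveI : ExpChar K₀ p := .prime hp
    haveI : CharP F p := (Algebra.charP_iff F K p).mpr ‹_›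
    haveI : ExpChar F p := .prime hp
    have hx : x ∈ adjoin K₀ ((· ^ p ^ r) '' Set.univ) := by
      rw [← adjoin_eq_adjoin_pow_expChar_pow_of_isSeparable' K₀ K Set.univ p r, adjoin_univ]
      trivial
    have hle : (adjoin K₀ ((· ^ p ^ r) '' Set.univ)).toSubfield ≤
        (adjoin Kr (Set.range t)).toSubfield := by
      rw [adjoin_toSubfield, adjoin_toSubfield]
      apply Subfield.closure_le.mpr
      rintro y (⟨z, rfl⟩ | ⟨z, -, rfl⟩)
      · -- `y = algebraMap K₀ K z`, with `z ∈ K₀ = F(t)`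
        have hz : (z : K) ∈ Subfield.closure (Set.range (algebraMap F K) ∪ Set.range t) := by
          have := z.2
          rwa [← SetLike.mem_coe, ← IntermediateField.coe_toSubfield, adjoin_toSubfield,
            SetLike.mem_coe] at this
        refine Subfield.closure_le.mpr ?_ hz
        rintro w (⟨a, rfl⟩ | hw)
        · -- elements of `F` are `p^r`-th powers
          obtain ⟨b, hb⟩ := (bijective_iterateFrobenius F p r).2 a
          refine Subfield.subset_closure (Or.inl ⟨⟨algebraMap F K a, ?_⟩, rfl⟩)
          exact ⟨algebraMap F K b, by rw [iterateFrobenius_def, ← map_pow,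
            ← iterateFrobenius_def (p := p) (n := r), hb]⟩
        · exact Subfield.subset_closure (Or.inr hw)
      · exact Subfield.subset_closure (Or.inl ⟨⟨z ^ p ^ r, hpow z⟩, rfl⟩)
    exact hle hx
  exact ((IntermediateField.equivOfEq htop).trans
    IntermediateField.topEquiv).toLinearEquiv.finiteDimensional

/-- Suppose there is a perfect subfield `F ⊆ K` such that `K` has finite transcendence
degree over `F` and is separably generated over `F`, i.e. there are finitely many
algebraically independent elements `t_1, …, t_m` of `K` over `F` such that `K` is an
algebraic separable extension of `F(t_1, …, t_m)`.  Then `L/K` is strictly infinite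
(not essentially finite) if and only if `L/K` is infinite. -/
theorem strictlyInfinite_iff_infinite_of_separably_generated
    (F K L : Type*) [Field F] [Field K] [Field L]
    [Algebra F K] [Algebra K L] [PerfectField F]
    (m : ℕ) (t : Fin m → K) (hind : AlgebraicIndependent F t)
    (hsep : Algebra.IsSeparable (IntermediateField.adjoin F (Set.range t)) K) :
    ¬ EssentiallyFinite K L ↔ ¬ FiniteDimensional K L := by
  refine not_congr ?_
  constructor
  · rintro (⟨h0, hfd⟩ | ⟨p, hp, hcharK, halg, r, hfd⟩)
    · exact hfd
    · haveI : Fact p.Prime := ⟨hp⟩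
      haveI := hcharK
      haveI : ExpChar K p := .prime hp
      haveI : CharP L p := charP_of_injective_algebraMap (algebraMap K L).injective p
      haveI : ExpChar L p := .prime hp
      set M := IntermediateField.adjoin K (Set.range fun y : L => y ^ p ^ r) with hM
      have hmem : ∀ x : L, x ^ p ^ r ∈ M := fun x =>
        IntermediateField.subset_adjoin _ _ ⟨x, rfl⟩
      set Kr : Subfield K := (iterateFrobenius K p r).fieldRange with hKr
      haveI hKrK : FiniteDimensional Kr K :=
        aux_finiteDimensional_fieldRange_iterateFrobenius hsep p hp r
      haveI : FiniteDimensional Kr M := Module.Finite.trans K M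
      let j : L →+ M :=
        { toFun := fun x => ⟨x ^ p ^ r, hmem x⟩
          map_zero' := by
            ext
            simp [zero_pow (pow_ne_zero r hp.ne_zero)]
          map_add' := fun x y => by
            ext
            push_cast
            exact add_pow_char_pow x y p r }
      let i : ZeroHom K Kr :=
        ⟨fun c => ⟨c ^ p ^ r, ⟨c, rfl⟩⟩, by
          ext
          simp [zero_pow (pow_ne_zero r hp.ne_zero)]⟩
      have hi : Function.Surjective i := by
        rintro ⟨_, c, rfl⟩
        exact ⟨c, rfl⟩
      have hj : ∀ x : L, j x = 0 → x = 0 := by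
        intro x hx
        have h0 : x ^ p ^ r = 0 := congrArg Subtype.val hx
        exact pow_eq_zero_iff (pow_ne_zero r hp.ne_zero) |>.1 h0
      have hc : ∀ (c : K) (x : L), j (c • x) = i c • j x := by
        intro c x
        have h1 : ((i c • j x : M) : L) = algebraMap K L ((i c : K)) * ((j x : L)) := by
          simp [Subfield.smul_def, Algebra.smul_def]
          exact Or.inl rfl
        apply Subtype.ext
        show (c • x) ^ p ^ r = ((i c • j x : M) : L)
        rw [h1, Algebra.smul_def]
        show (algebraMap K L c * x) ^ p ^ r = algebraMap K L (c ^ p ^ r) * x ^ p ^ r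
        rw [map_pow, mul_pow]
      have b := Module.Basis.ofVectorSpace K L
      have hli : LinearIndependent Kr (⇑j ∘ ⇑b) :=
        b.linearIndependent.map_of_surjective_injective i j hi hj hc
      haveI : Finite (Module.Basis.ofVectorSpaceIndex K L) := hli.finite
      exact Module.Finite.of_basis b
  · intro hFD
    rcases CharP.exists K with ⟨q, hq⟩
    haveI := hq
    rcases CharP.char_is_prime_or_zero K q with hq' | rfl
    · exact Or.inr ⟨q, hq', hq, Algebra.IsAlgebraic.of_finite K L, 0, inferInstance⟩
    · exact Or.inl ⟨hq, hFD⟩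
end

section
/- Let K be an infinite field and E a finite-dimensional associative unital K-algebra. Then the K-subalgebra of E generated by the group of units E^× equals E. -/
open Polynomial

/-- For any element `x` of a finite-dimensional algebra over an infinite field,
there is a scalar `c` such that `x - c • 1` is a unit. -/
lemma exists_sub_algebraMap_isUnit
    (K E : Type*) [Field K] [Infinite K] [Ring E] [Algebra K E]
    [FiniteDimensional K E] (x : E) :
    ∃ c : K, IsUnit (x - algebraMap K E c) := by
  classical
  have hx : IsIntegral K x := Algebra.IsIntegral.isIntegral x
  set p := minpoly K x with hp
  have hp0 : p ≠ 0 := minpoly.ne_zero hx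
  obtain ⟨c, hc⟩ : ∃ c : K, p.eval c ≠ 0 := by
    obtain ⟨c, hc⟩ := Infinite.exists_notMem_finset p.roots.toFinset
    refine ⟨c, fun h => hc ?_⟩
    simp [Polynomial.mem_roots, hp0, h]
  obtain ⟨q, hq⟩ : X - C c ∣ p - C (p.eval c) := Polynomial.X_sub_C_dvd_sub_C_eval
  have haev : Polynomial.aeval x p = 0 := minpoly.aeval K x
  have key : (x - algebraMap K E c) * Polynomial.aeval x q
      = - algebraMap K E (p.eval c) := by
    have h := congrArg (Polynomial.aeval x) hq
    simp only [map_sub, map_mul, Polynomial.aeval_X, Polynomial.aeval_C, haev, zero_sub] at h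
    rw [← h]
  have key2 : Polynomial.aeval x q * (x - algebraMap K E c)
      = - algebraMap K E (p.eval c) := by
    have hcomm : (x - algebraMap K E c) * Polynomial.aeval x q
        = Polynomial.aeval x q * (x - algebraMap K E c) := by
      have h1 : Polynomial.aeval x ((X - C c) * q) = Polynomial.aeval x (q * (X - C c)) := by
        ring_nf
      simpa [map_mul] using h1
    rw [← hcomm, key]
  set u : E := (-(p.eval c)⁻¹) • Polynomial.aeval x q with hu
  have h1 : (x - algebraMap K E c) * u = 1 := by
    rw [hu, mul_smul_comm, key, smul_neg, neg_smul, neg_neg, Algebra.smul_def,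
      ← map_mul, inv_mul_cancel₀ hc, map_one]
  have h2 : u * (x - algebraMap K E c) = 1 := by
    rw [hu, smul_mul_assoc, key2, smul_neg, neg_smul, neg_neg, Algebra.smul_def,
      ← map_mul, inv_mul_cancel₀ hc, map_one]
  exact ⟨c, ⟨⟨x - algebraMap K E c, u, h1, h2⟩, rfl⟩⟩

/-- Let `K` be an infinite field and `E` a finite-dimensional associative unital
`K`-algebra.  Then the `K`-subalgebra of `E` generated by the group of units `Eˣ`
equals `E`. -/
theorem adjoin_units_eq_top_of_infinite_field
    (K E : Type*) [Field K] [Infinite K] [Ring E] [Algebra K E]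
    [FiniteDimensional K E] :
    Algebra.adjoin K {x : E | IsUnit x} = ⊤ := by
  rw [eq_top_iff]
  rintro x -
  obtain ⟨c, hc⟩ := exists_sub_algebraMap_isUnit K E x
  have h1 : x - algebraMap K E c ∈ Algebra.adjoin K {x : E | IsUnit x} :=
    Algebra.subset_adjoin hc
  have h2 : algebraMap K E c ∈ Algebra.adjoin K {x : E | IsUnit x} :=
    Subalgebra.algebraMap_mem _ c
  have hxx : x = (x - algebraMap K E c) + algebraMap K E c := by abel
  rw [hxx]
  exact add_mem h1 h2
end

section
/- Let K be a field, n ≥ 2, 0 < r < n, and V0 an n-dimensional K-vector space. Then the map sending an r-dimensional K-subspace U ⊆ V0 to the subalgebra {α ∈ End_K(V0) : α(U) ⊆ U} is a bijection from the set of r-dimensional K-subspaces of V0 onto the set of parabolic K-subalgebras of End_K(V0) of type (r, n−r). -/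
/-- The stabilizer set of a subspace `U`: endomorphisms of `V` mapping `U` into itself.
(This is a `K`-subalgebra of `End_K(V)`.) -/
def stabilizerSet (K V : Type*) [Field K] [AddCommGroup V] [Module K V]
    (U : Submodule K V) : Set (Module.End K V) :=
  {α : Module.End K V | ∀ x ∈ U, α x ∈ U}

/-- A subset of `End_K(V)` is a *parabolic subalgebra of type `(r, n − r)`* if, with
respect to some `K`-basis of `V` (indexed by `Fin n`), it is the algebra of block
upper-triangular matrices `[[Mat_r(K), Mat_{r,n−r}(K)], [0, Mat_{n−r}(K)]]`;
equivalently, it is the stabilizer algebra of the span of the first `r` basis vectors. -/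
def IsParabolicOfType (K V : Type*) [Field K] [AddCommGroup V] [Module K V]
    (n r : ℕ) (S : Set (Module.End K V)) : Prop :=
  ∃ b : Module.Basis (Fin n) K V,
    S = stabilizerSet K V (Submodule.span K (⇑b '' {i : Fin n | (i : ℕ) < r}))

/-- Any `r`-dimensional subspace is the span of the first `r` vectors of some basis. -/
theorem exists_basis_span_first
    (K V : Type*) [Field K] [AddCommGroup V] [Module K V] [FiniteDimensional K V]
    {n r : ℕ} (hrn : r ≤ n) (hdim : Module.finrank K V = n)
    (U : Submodule K V) (hU : Module.finrank K U = r) :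
    ∃ b : Module.Basis (Fin n) K V,
      U = Submodule.span K (⇑b '' {i : Fin n | (i : ℕ) < r}) := by
  obtain ⟨W, hW⟩ := U.exists_isCompl
  have hsum := Submodule.finrank_add_eq_of_isCompl hW
  have hWr : Module.finrank K W = n - r := by omega
  let bu := Module.finBasisOfFinrankEq K U hU
  let bw := Module.finBasisOfFinrankEq K W hWr
  have hnr : r + (n - r) = n := by omega
  let e : Fin r ⊕ Fin (n - r) ≃ Fin n := finSumFinEquiv.trans (finCongr hnr)
  let b : Module.Basis (Fin n) K V :=
    ((bu.prod bw).map (Submodule.prodEquivOfIsCompl U W hW)).reindex e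
  have hb : ∀ j : Fin r, b (e (Sum.inl j)) = (bu j : V) := by
    intro j
    simp only [b, Module.Basis.reindex_apply, Equiv.symm_apply_apply, Module.Basis.map_apply,
      Module.Basis.prod_apply, Sum.elim_inl, Function.comp_apply, LinearMap.inl_apply,
      Submodule.coe_prodEquivOfIsCompl', Submodule.coe_zero, add_zero]
  have he : ∀ j : Fin r, ((e (Sum.inl j) : Fin n) : ℕ) = (j : ℕ) := by
    intro j; simp [e]
  have himg : ⇑b '' {i : Fin n | (i : ℕ) < r} = Set.range (fun j : Fin r => (bu j : V)) := by
    ext x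
    constructor
    · rintro ⟨i, hi, rfl⟩
      refine ⟨⟨(i : ℕ), hi⟩, ?_⟩
      have hie : i = e (Sum.inl ⟨(i : ℕ), hi⟩) := by
        apply Fin.ext
        rw [he]
      show (bu ⟨(i : ℕ), hi⟩ : V) = b i
      rw [← hb ⟨(i : ℕ), hi⟩]
      exact congrArg b hie.symm
    · rintro ⟨j, rfl⟩
      exact ⟨e (Sum.inl j), by simpa [he j] using j.isLt, hb j⟩
  refine ⟨b, ?_⟩
  rw [himg]
  have : Set.range (fun j : Fin r => (bu j : V)) = U.subtype '' Set.range bu := by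
    rw [← Set.range_comp]; rfl
  rw [this, ← Submodule.map_span, bu.span_eq, Submodule.map_subtype_top]

theorem span_basis_image_finrank
    (K V : Type*) [Field K] [AddCommGroup V] [Module K V] [FiniteDimensional K V]
    {n r : ℕ} (hrn : r ≤ n) (b : Module.Basis (Fin n) K V) :
    Module.finrank K (Submodule.span K (⇑b '' {i : Fin n | (i : ℕ) < r})) = r := by
  classical
  have himg : ⇑b '' {i : Fin n | (i : ℕ) < r}
      = Set.range (fun j : Fin r => b ⟨(j : ℕ), lt_of_lt_of_le j.isLt hrn⟩) := by
    ext x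
    constructor
    · rintro ⟨i, hi, rfl⟩
      exact ⟨⟨(i : ℕ), hi⟩, by congr⟩
    · rintro ⟨j, rfl⟩
      exact ⟨_, j.isLt, rfl⟩
  rw [himg]
  have hli : LinearIndependent K (fun j : Fin r => b ⟨(j : ℕ), lt_of_lt_of_le j.isLt hrn⟩) :=
    b.linearIndependent.comp _ (fun j j' h => by
      apply Fin.ext
      simpa using congrArg (fun i : Fin n => (i : ℕ)) h)
  simpa using finrank_span_eq_card hli

theorem stab_le_of_stab_subset
    (K V : Type*) [Field K] [AddCommGroup V] [Module K V] [FiniteDimensional K V]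
    {n r : ℕ} (hrn : r < n) (hdim : Module.finrank K V = n)
    (U U' : Submodule K V) (hU : Module.finrank K U = r) (hU' : Module.finrank K U' = r)
    (h : stabilizerSet K V U' ⊆ stabilizerSet K V U) : U ≤ U' := by
  intro x hx
  by_contra hxU'
  -- pick y ∉ U
  have hUtop : U ≠ ⊤ := by
    intro hUeq
    rw [hUeq, finrank_top] at hU
    omega
  obtain ⟨y, hy⟩ : ∃ y : V, y ∉ U := by
    by_contra hc
    push_neg at hc
    exact hUtop (Submodule.eq_top_iff'.mpr hc)
  obtain ⟨f, hfx, hfU'⟩ := U'.exists_dual_map_eq_bot_of_notMem hxU' inferInstance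
  set α : Module.End K V := LinearMap.smulRight f y with hα
  have hαstab : α ∈ stabilizerSet K V U' := by
    intro u hu
    have : f u = 0 := by
      have : f u ∈ Submodule.map f U' := ⟨u, hu, rfl⟩
      rwa [hfU', Submodule.mem_bot] at this
    simp [hα, LinearMap.smulRight_apply, this]
  have := h hαstab x hx
  rw [hα] at this
  simp only [LinearMap.smulRight_apply] at this
  rw [Submodule.smul_mem_iff _ hfx] at this
  exact hy this

/-- Let `K` be a field, `n ≥ 2`, `0 < r < n`, and `V` an `n`-dimensional `K`-vector space.
The map sending an `r`-dimensional `K`-subspace `U ⊆ V` to the subalgebra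
`{α ∈ End_K(V) : α(U) ⊆ U}` is a bijection from the set of `r`-dimensional subspaces of
`V` onto the set of parabolic `K`-subalgebras of `End_K(V)` of type `(r, n − r)`. -/
theorem bijOn_stabilizer_parabolic
    (K V : Type*) [Field K] [AddCommGroup V] [Module K V] [FiniteDimensional K V]
    (n r : ℕ) (hn : 2 ≤ n) (hr : 0 < r) (hrn : r < n)
    (hdim : Module.finrank K V = n) :
    Set.BijOn (fun U : Submodule K V => stabilizerSet K V U)
      {U : Submodule K V | Module.finrank K U = r}
      {S : Set (Module.End K V) | IsParabolicOfType K V n r S} := by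
  refine ⟨?_, ?_, ?_⟩
  · intro U hU
    obtain ⟨b, hb⟩ := exists_basis_span_first (K := K) (V := V) hrn.le hdim U hU
    exact ⟨b, by rw [← hb]⟩
  · intro U hU U' hU' hstab
    simp only [Set.mem_setOf_eq] at hU hU'
    have h1 : U ≤ U' := stab_le_of_stab_subset K V hrn hdim U U' hU hU' (le_of_eq hstab.symm)
    have h2 : U' ≤ U := stab_le_of_stab_subset K V hrn hdim U' U hU' hU (le_of_eq hstab)
    exact le_antisymm h1 h2
  · rintro S ⟨b, rfl⟩
    exact ⟨Submodule.span K (⇑b '' {i : Fin n | (i : ℕ) < r}),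
      span_basis_image_finrank K V hrn.le b, rfl⟩
end

section
/- Let K ⊆ L ⊆ L' be a tower of fields, V0 a finite-dimensional K-vector space, and W an L-subspace of V0 ⊗_K L. Let W_{L'} ⊆ V0 ⊗_K L' denote the L'-span of the image of W under the canonical map V0 ⊗_K L → V0 ⊗_K L'. Then End(V0, W_{L'}) = End(V0, W). -/
open scoped TensorProduct

-- aux: over a field, 1 ⊗ x ∈ W.baseChange → x ∈ W
lemma aux_mem_of_one_tmul_mem {L L' M : Type*} [Field L] [Field L'] [Algebra L L']
    [AddCommGroup M] [Module L M] (W : Submodule L M) {x : M}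
    (hx : (1 : L') ⊗ₜ[L] x ∈ W.baseChange L') : x ∈ W := by
  set q := W.mkQ
  have hinj : Function.Injective (fun y : M ⧸ W => (1 : L') ⊗ₜ[L] y) := by
    have h1 : Function.Injective ((Algebra.linearMap L L').rTensor (M ⧸ W)) :=
      Module.Flat.rTensor_preserves_injective_linearMap _ (algebraMap L L').injective
    have : (fun y : M ⧸ W => (1 : L') ⊗ₜ[L] y) =
        ((Algebra.linearMap L L').rTensor (M ⧸ W)) ∘ (TensorProduct.lid L (M ⧸ W)).symm := by
      ext y; simp
    rw [this]
    exact h1.comp (TensorProduct.lid L (M ⧸ W)).symm.injective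
  have hq : (LinearMap.baseChange L' q) ((1 : L') ⊗ₜ[L] x) = 0 := by
    have hmap : Submodule.map (LinearMap.baseChange L' q) (W.baseChange L') ≤ ⊥ := by
      rw [Submodule.baseChange_eq_span, Submodule.map_span, Submodule.span_le]
      rintro _ ⟨_, ⟨w, hw, rfl⟩, rfl⟩
      simp only [TensorProduct.mk_apply, LinearMap.baseChange_tmul, q, Submodule.mkQ_apply,
        (Submodule.Quotient.mk_eq_zero W).mpr hw, TensorProduct.tmul_zero, SetLike.mem_coe,
        Submodule.mem_bot]
    simpa using hmap ⟨_, hx, rfl⟩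
  rw [LinearMap.baseChange_tmul] at hq
  have : q x = 0 := by
    have := hinj (a₁ := q x) (a₂ := 0) (by simpa using hq)
    simpa using this
  exact (Submodule.Quotient.mk_eq_zero W).mp (by simpa [q] using this)

/-- The relative endomorphism algebra `End(V, W)` of an `L`-subspace `W ⊆ V ⊗_K L`:
the `K`-endomorphisms of `V` whose `L`-linear extension maps `W` into itself. -/
def relEnd (K L V : Type*) [Field K] [Field L] [Algebra K L]
    [AddCommGroup V] [Module K V] (W : Submodule L (L ⊗[K] V)) :
    Set (Module.End K V) :=
  {α : Module.End K V | Submodule.map (LinearMap.baseChange L α) W ≤ W}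

/-- Let `K ⊆ L ⊆ L'` be a tower of fields, `V` a finite-dimensional `K`-vector space, and
`W` an `L`-subspace of `V ⊗_K L`.  Let `W_{L'} ⊆ V ⊗_K L'` be the `L'`-span of the image
of `W` under the canonical map `V ⊗_K L → V ⊗_K L'`.  Then `End(V, W_{L'}) = End(V, W)`. -/
theorem relEnd_extend_scalars
    (K L L' V : Type*) [Field K] [Field L] [Field L']
    [Algebra K L] [Algebra L L'] [Algebra K L'] [IsScalarTower K L L']
    [AddCommGroup V] [Module K V] [FiniteDimensional K V]
    (W : Submodule L (L ⊗[K] V)) :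
    relEnd K L' V
      (Submodule.span L'
        (LinearMap.rTensor V (IsScalarTower.toAlgHom K L L').toLinearMap '' (W : Set (L ⊗[K] V)))) =
    relEnd K L V W := by
  set f := (IsScalarTower.toAlgHom K L L').toLinearMap with hf
  set j := LinearMap.rTensor V f with hj
  have hcomm : ∀ (α : Module.End K V) (x : L ⊗[K] V),
      LinearMap.baseChange L' α (j x) = j (LinearMap.baseChange L α x) := by
    intro α x
    induction x using TensorProduct.induction_on with
    | zero => simp
    | tmul a v => simp [hj]
    | add x y hx hy => simp only [map_add, hx, hy]
  set e := TensorProduct.AlgebraTensorModule.cancelBaseChange K L L' L' V with he'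
  have he : ∀ x : L ⊗[K] V, e ((1 : L') ⊗ₜ[L] x) = j x := by
    intro x
    induction x using TensorProduct.induction_on with
    | zero => simp
    | tmul a v =>
        simp [he', hj, hf, TensorProduct.AlgebraTensorModule.cancelBaseChange_tmul,
          Algebra.smul_def]
    | add x y hx hy => simp only [TensorProduct.tmul_add, map_add, hx, hy]
  have hspan : Submodule.span L' (j '' (W : Set (L ⊗[K] V))) =
      Submodule.map (e : L' ⊗[L] (L ⊗[K] V) →ₗ[L'] L' ⊗[K] V) (W.baseChange L') := by
    rw [Submodule.baseChange_eq_span, Submodule.map_span, Submodule.map_coe, ← Set.image_comp]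
    congr 1
    refine Set.image_congr fun x _ => ?_
    simpa using (he x).symm
  ext α
  simp only [relEnd, Set.mem_setOf_eq]
  constructor
  · intro h
    rintro _ ⟨x, hx, rfl⟩
    have h1 : j x ∈ Submodule.span L' (j '' (W : Set (L ⊗[K] V))) :=
      Submodule.subset_span ⟨x, hx, rfl⟩
    have h2 := h ⟨j x, h1, rfl⟩
    rw [hcomm] at h2
    rw [hspan] at h2
    obtain ⟨y, hy, hey⟩ := h2
    have hy' : y = (1 : L') ⊗ₜ[L] (LinearMap.baseChange L α x) := by
      apply e.injective
      rw [LinearEquiv.coe_coe] at hey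
      rw [hey, he]
    rw [hy'] at hy
    exact aux_mem_of_one_tmul_mem W hy
  · intro h
    rw [Submodule.map_span_le]
    rintro _ ⟨x, hx, rfl⟩
    rw [hcomm]
    exact Submodule.subset_span ⟨_, h ⟨x, hx, rfl⟩, rfl⟩
end

section
/- Let k0 be a field, k an algebraically closed field containing k0, n ≥ 2 and 0 < r < n. Let T = (t_{ij}) ∈ Mat_{(n−r)×r}(k) and suppose that the evaluation map ev_T : f ↦ f(T), from the k0-subspace of polynomials of total degree ≤ 2 in the polynomial ring k0[X_{ij} : 1 ≤ i ≤ n−r, 1 ≤ j ≤ r] to k, is injective. Let W_T ⊆ k^n be the k-span of the r columns of the n×r block matrix with upper block T and lower block the identity I_r. Then {A ∈ Mat_n(k0) : A·W_T ⊆ W_T} = k0·I_n, i.e., the only matrices with entries in k0 preserving W_T are the scalar matrices. -/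
set_option linter.unusedSectionVars false
set_option linter.unreachableTactic false
set_option linter.unusedTactic false
set_option maxHeartbeats 1000000

section helpers
variable {α : Type*}

lemma weight_single' (v : α) (n : ℕ) :
    ((Finsupp.single v n : α →₀ ℕ).sum fun _ e => e) = n :=
  Finsupp.sum_single_index rfl

lemma weight_add' (s t : α →₀ ℕ) :
    ((s + t).sum fun _ e => e) = (s.sum fun _ e => e) + t.sum fun _ e => e :=
  Finsupp.sum_add_index' (fun _ => rfl) (fun _ _ _ => rfl)

lemma ss_ne_single (v w u : α) (n : ℕ) (hn : n ≠ 2) :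
    Finsupp.single v 1 + Finsupp.single w 1 ≠ (Finsupp.single u n : α →₀ ℕ) := by
  intro h
  have := congrArg (fun s : α →₀ ℕ => s.sum fun _ e => e) h
  simp only [weight_add', weight_single'] at this
  omega

lemma ss_eq_single_two_iff (v w u : α) :
    Finsupp.single v 1 + Finsupp.single w 1 = (Finsupp.single u 2 : α →₀ ℕ) ↔
      v = u ∧ w = u := by
  classical
  constructor
  · intro h
    have hv := DFunLike.congr_fun h v
    have hw := DFunLike.congr_fun h w
    simp only [Finsupp.add_apply, Finsupp.single_apply, if_true, eq_self_iff_true] at hv hw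
    constructor
    · by_cases huv : u = v
      · exact huv.symm
      · rw [if_neg huv] at hv; split_ifs at hv <;> omega
    · by_cases huw : u = w
      · exact huw.symm
      · rw [if_neg huw] at hw; split_ifs at hw <;> omega
  · rintro ⟨rfl, rfl⟩
    rw [← Finsupp.single_add]

lemma ss_ne_zero (v w : α) : Finsupp.single v 1 + Finsupp.single w 1 ≠ (0 : α →₀ ℕ) := by
  intro h
  have := congrArg (fun s : α →₀ ℕ => s.sum fun _ e => e) h
  simp only [weight_add', weight_single', Finsupp.sum_zero_index] at this
  omega

end helpers

/-- The `k`-span `W_T` of the `r` columns of the `n × r` block matrix with upper block `T`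
and lower block the identity `I_r`, inside `k^n = k^{(n-r)} ⊕ k^r`. -/
def colSpanT (k : Type*) [Field k] (m r : ℕ) (T : Matrix (Fin m) (Fin r) k) :
    Submodule k ((Fin m ⊕ Fin r) → k) :=
  Submodule.span k (Set.range fun j : Fin r =>
    (Sum.elim (fun i => T i j) (fun i => if i = j then (1 : k) else 0) :
      (Fin m ⊕ Fin r) → k))

theorem mem_colSpanT {k : Type*} [Field k] {m r : ℕ} (T : Matrix (Fin m) (Fin r) k)
    (v : (Fin m ⊕ Fin r) → k) :
    v ∈ colSpanT k m r T ↔ ∀ i, v (Sum.inl i) = ∑ j, T i j * v (Sum.inr j) := by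
  constructor
  · intro hv
    let U : Submodule k ((Fin m ⊕ Fin r) → k) :=
      { carrier := {v | ∀ i, v (Sum.inl i) = ∑ j, T i j * v (Sum.inr j)}
        add_mem' := by
          intro a b ha hb i
          simp only [Pi.add_apply, ha i, hb i, mul_add, Finset.sum_add_distrib]
        zero_mem' := by simp
        smul_mem' := by
          intro c a ha i
          simp only [Pi.smul_apply, smul_eq_mul, ha i, Finset.mul_sum]
          exact Finset.sum_congr rfl fun j _ => by ring }
    have hle : colSpanT k m r T ≤ U := by
      rw [colSpanT, Submodule.span_le]
      rintro _ ⟨j, rfl⟩ i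
      simp
    exact hle hv
  · intro hv
    have : v = ∑ j : Fin r, v (Sum.inr j) •
        (Sum.elim (fun i => T i j) (fun i => if i = j then (1 : k) else 0) :
          (Fin m ⊕ Fin r) → k) := by
      funext x
      cases x with
      | inl i => simp [hv i, mul_comm]
      | inr i => simp [Finset.sum_ite_eq]
    rw [this]
    exact Submodule.sum_mem _ fun j _ => Submodule.smul_mem _ _
      (Submodule.subset_span ⟨j, rfl⟩)

open MvPolynomial in
/-- The key entrywise consequence of preserving `W_T`, extracted from injectivity of
evaluation at `T` on polynomials of total degree at most `2`. -/
theorem key_entries (k₀ k : Type*) [Field k₀] [Field k] [Algebra k₀ k]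
    (m r : ℕ)
    (T : Matrix (Fin m) (Fin r) k)
    (hinj : Set.InjOn (MvPolynomial.aeval fun p : Fin m × Fin r => T p.1 p.2)
      {f : MvPolynomial (Fin m × Fin r) k₀ | f.totalDegree ≤ 2})
    (A : Matrix (Fin m ⊕ Fin r) (Fin m ⊕ Fin r) k₀)
    (heq : ∀ (i : Fin m) (j : Fin r),
        (∑ a, algebraMap k₀ k (A (Sum.inl i) (Sum.inl a)) * T a j)
          + algebraMap k₀ k (A (Sum.inl i) (Sum.inr j))
          = ∑ l, T i l * ((∑ a, algebraMap k₀ k (A (Sum.inr l) (Sum.inl a)) * T a j)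
              + algebraMap k₀ k (A (Sum.inr l) (Sum.inr j)))) :
    ∀ (i : Fin m) (j : Fin r),
        A (Sum.inl i) (Sum.inr j) = 0 ∧ A (Sum.inr j) (Sum.inl i) = 0 ∧
        A (Sum.inl i) (Sum.inl i) = A (Sum.inr j) (Sum.inr j) ∧
        (∀ a, a ≠ i → A (Sum.inl i) (Sum.inl a) = 0) ∧
        (∀ b, b ≠ j → A (Sum.inr b) (Sum.inr j) = 0) := by
  intro i j
  set f : MvPolynomial (Fin m × Fin r) k₀ :=
    ((∑ a, monomial (Finsupp.single (a, j) 1) (A (Sum.inl i) (Sum.inl a)))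
      + monomial 0 (A (Sum.inl i) (Sum.inr j)))
      - ((∑ l, monomial (Finsupp.single (i, l) 1) (A (Sum.inr l) (Sum.inr j)))
        + ∑ l, ∑ a, monomial (Finsupp.single (i, l) 1 + Finsupp.single (a, j) 1)
            (A (Sum.inr l) (Sum.inl a))) with hfdef
  have hdeg : f.totalDegree ≤ 2 := by
    refine (totalDegree_sub _ _).trans (max_le ?_ ?_)
    · refine (totalDegree_add _ _).trans (max_le ?_ ?_)
      · refine (totalDegree_finset_sum _ _).trans (Finset.sup_le fun a _ => ?_)
        refine (totalDegree_monomial_le _ _).trans ?_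
        show ((Finsupp.single ((a : Fin m), j) 1 : _ →₀ ℕ).sum fun _ e => e) ≤ 2
        rw [weight_single' _ 1]; omega
      · refine (totalDegree_monomial_le _ _).trans ?_
        simp
    · refine (totalDegree_add _ _).trans (max_le ?_ ?_)
      · refine (totalDegree_finset_sum _ _).trans (Finset.sup_le fun l _ => ?_)
        refine (totalDegree_monomial_le _ _).trans ?_
        show ((Finsupp.single (i, (l : Fin r)) 1 : _ →₀ ℕ).sum fun _ e => e) ≤ 2
        rw [weight_single' _ 1]; omega
      · refine (totalDegree_finset_sum _ _).trans (Finset.sup_le fun l _ => ?_)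
        refine (totalDegree_finset_sum _ _).trans (Finset.sup_le fun a _ => ?_)
        refine (totalDegree_monomial_le _ _).trans ?_
        show (((Finsupp.single (i, (l : Fin r)) 1 : _ →₀ ℕ)
            + Finsupp.single ((a : Fin m), j) 1).sum fun _ e => e) ≤ 2
        rw [weight_add', weight_single' _ 1, weight_single' _ 1]
  have hev : (aeval fun p : Fin m × Fin r => T p.1 p.2) f = 0 := by
    have e1 : (aeval fun p : Fin m × Fin r => T p.1 p.2) f =
        ((∑ a, algebraMap k₀ k (A (Sum.inl i) (Sum.inl a)) * T a j)
          + algebraMap k₀ k (A (Sum.inl i) (Sum.inr j)))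
        - ((∑ l, algebraMap k₀ k (A (Sum.inr l) (Sum.inr j)) * T i l)
          + ∑ l, ∑ a, algebraMap k₀ k (A (Sum.inr l) (Sum.inl a)) * (T i l * T a j)) := by
      simp [hfdef, aeval_monomial, Finsupp.prod_add_index' (fun p => pow_zero _)
          (fun p a b => pow_add _ a b),
        Finsupp.prod_single_index (pow_zero _), pow_one]
    rw [e1, sub_eq_zero, heq i j]
    rw [Finset.sum_congr rfl (fun l _ => by rw [mul_add, Finset.mul_sum]),
      Finset.sum_add_distrib, add_comm]
    congr 1
    · exact Finset.sum_congr rfl fun l _ => by ring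
    · exact Finset.sum_congr rfl fun l _ => Finset.sum_congr rfl fun a _ => by ring
  have hf0 : f = 0 := hinj hdeg (by simp) (by rw [hev, map_zero])
  refine ⟨?_, ?_, ?_, ?_, ?_⟩
  · have := congrArg (coeff 0) hf0
    simpa [hfdef, coeff_sum, coeff_monomial, Finsupp.single_eq_zero, ss_ne_zero] using this
  · have hcol : ∀ (x : Fin r) (y : Fin m),
        (if x = j ∧ y = i then A (Sum.inr x) (Sum.inl y) else 0)
          = if y = i then (if x = j then A (Sum.inr x) (Sum.inl y) else 0) else 0 := by
      intro x y
      by_cases h1 : x = j <;> by_cases h2 : y = i <;> simp [h1, h2]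
    have := congrArg (coeff (Finsupp.single (i, j) 2)) hf0
    simpa [hfdef, coeff_sum, coeff_monomial, hcol,
      (show (0 : (Fin m × Fin r) →₀ ℕ) ≠ Finsupp.single (i, j) 2 from fun h => by
        simpa using (Finsupp.single_eq_zero.mp h.symm)),
      ss_eq_single_two_iff, Finsupp.single_eq_single_iff,
      Prod.mk.injEq, Finset.sum_ite_eq, Finset.sum_ite_eq'] using this
  · have := congrArg (coeff (Finsupp.single (i, j) 1)) hf0
    have h2 := ss_ne_single (α := Fin m × Fin r)
    simpa [hfdef, coeff_sum, coeff_monomial,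
      (show (0 : (Fin m × Fin r) →₀ ℕ) ≠ Finsupp.single (i, j) 1 from fun h => by
        simpa using (Finsupp.single_eq_zero.mp h.symm)),
      Finsupp.single_eq_single_iff, Prod.mk.injEq,
      fun v w : Fin m × Fin r => ss_ne_single v w (i, j) 1 (by norm_num : (1:ℕ) ≠ 2),
      Finset.sum_ite_eq, Finset.sum_ite_eq', sub_eq_zero] using this
  · intro a ha
    have := congrArg (coeff (Finsupp.single (a, j) 1)) hf0
    simpa [hfdef, coeff_sum, coeff_monomial,
      (show (0 : (Fin m × Fin r) →₀ ℕ) ≠ Finsupp.single (a, j) 1 from fun h => by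
        simpa using (Finsupp.single_eq_zero.mp h.symm)),
      Finsupp.single_eq_single_iff, Prod.mk.injEq, ha.symm,
      fun v w : Fin m × Fin r => ss_ne_single v w (a, j) 1 (by norm_num : (1:ℕ) ≠ 2),
      Finset.sum_ite_eq, Finset.sum_ite_eq'] using this
  · intro b hb
    have := congrArg (coeff (Finsupp.single (i, b) 1)) hf0
    simpa [hfdef, coeff_sum, coeff_monomial,
      (show (0 : (Fin m × Fin r) →₀ ℕ) ≠ Finsupp.single (i, b) 1 from fun h => by
        simpa using (Finsupp.single_eq_zero.mp h.symm)),
      Finsupp.single_eq_single_iff, Prod.mk.injEq, hb.symm,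
      fun v w : Fin m × Fin r => ss_ne_single v w (i, b) 1 (by norm_num : (1:ℕ) ≠ 2),
      Finset.sum_ite_eq, Finset.sum_ite_eq'] using this

/-- Let `k₀` be a field, `k` an algebraically closed field containing `k₀`, `n ≥ 2` and
`0 < r < n`.  Let `T ∈ Mat_{(n−r)×r}(k)` and suppose that evaluation at `T` is injective on
the `k₀`-subspace of polynomials of total degree `≤ 2` in `k₀[X_{ij}]`.  Let `W_T ⊆ k^n` be
the `k`-span of the columns of the block matrix `[T; I_r]`.  Then the only matrices with
entries in `k₀` preserving `W_T` are the scalar matrices. -/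
theorem stabilizer_eq_scalars_of_degree_two_injective
    (k₀ k : Type*) [Field k₀] [Field k] [IsAlgClosed k] [Algebra k₀ k]
    (n r : ℕ) (hn : 2 ≤ n) (hr : 0 < r) (hrn : r < n)
    (T : Matrix (Fin (n - r)) (Fin r) k)
    (hinj : Set.InjOn (MvPolynomial.aeval fun p : Fin (n - r) × Fin r => T p.1 p.2)
      {f : MvPolynomial (Fin (n - r) × Fin r) k₀ | f.totalDegree ≤ 2}) :
    {A : Matrix (Fin (n - r) ⊕ Fin r) (Fin (n - r) ⊕ Fin r) k₀ |
        ∀ x ∈ colSpanT k (n - r) r T,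
          (A.map (algebraMap k₀ k)).mulVec x ∈ colSpanT k (n - r) r T} =
      {A : Matrix (Fin (n - r) ⊕ Fin r) (Fin (n - r) ⊕ Fin r) k₀ |
        ∃ a : k₀, A = a • (1 : Matrix (Fin (n - r) ⊕ Fin r) (Fin (n - r) ⊕ Fin r) k₀)} := by
  have hm0 : 0 < n - r := Nat.sub_pos_of_lt hrn
  ext A
  simp only [Set.mem_setOf_eq]
  constructor
  · intro h
    -- raw equations from preservation of the generators
    have heq : ∀ (i : Fin (n - r)) (j : Fin r),
        (∑ a, algebraMap k₀ k (A (Sum.inl i) (Sum.inl a)) * T a j)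
          + algebraMap k₀ k (A (Sum.inl i) (Sum.inr j))
          = ∑ l, T i l * ((∑ a, algebraMap k₀ k (A (Sum.inr l) (Sum.inl a)) * T a j)
              + algebraMap k₀ k (A (Sum.inr l) (Sum.inr j))) := by
      intro i j
      have hg : (Sum.elim (fun i => T i j) (fun i => if i = j then (1 : k) else 0) :
          (Fin (n - r) ⊕ Fin r) → k) ∈ colSpanT k (n - r) r T :=
        Submodule.subset_span ⟨j, rfl⟩
      have h2 := (mem_colSpanT T _).1 (h _ hg) i
      simpa [Matrix.mulVec, dotProduct, Fintype.sum_sum_type, Matrix.map_apply,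
        mul_ite, mul_one, mul_zero, Finset.sum_ite_eq, Finset.sum_ite_eq'] using h2
    have key := key_entries k₀ k (n - r) r T hinj A heq
    set i0 : Fin (n - r) := ⟨0, hm0⟩
    set j0 : Fin r := ⟨0, hr⟩
    refine ⟨A (Sum.inl i0) (Sum.inl i0), ?_⟩
    ext x y
    rw [Matrix.smul_apply, Matrix.one_apply]
    rcases x with i | b <;> rcases y with a | j
    · rcases eq_or_ne i a with rfl | hia
      · rw [if_pos rfl]
        have h1 := (key i j0).2.2.1
        have h2 := (key i0 j0).2.2.1
        simp only [smul_eq_mul, mul_one]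
        rw [h1, ← h2]
      · rw [if_neg (by simpa using hia)]
        simpa using (key i j0).2.2.2.1 a (fun hai => hia hai.symm)
    · rw [if_neg (by simp)]
      simpa using (key i j).1
    · rw [if_neg (by simp)]
      simpa using (key a b).2.1
    · rcases eq_or_ne b j with rfl | hbj
      · rw [if_pos rfl]
        have h1 := (key i0 b).2.2.1
        simp only [smul_eq_mul, mul_one]
        rw [← h1]
      · rw [if_neg (by simpa using hbj)]
        simpa using (key i0 j).2.2.2.2 b hbj
  · rintro ⟨a, rfl⟩ x hx
    have : ((a • (1 : Matrix (Fin (n - r) ⊕ Fin r) (Fin (n - r) ⊕ Fin r) k₀)).map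
        (algebraMap k₀ k)).mulVec x = algebraMap k₀ k a • x := by
      funext y
      simp [Matrix.mulVec, dotProduct, Matrix.one_apply, Matrix.map_apply,
        apply_ite, Finset.sum_ite_eq, mul_ite]
    rw [this]
    exact Submodule.smul_mem _ _ hx
end

section
/- Let k0 be a field and k an algebraically closed field such that the extension k/k0 is infinite, and let 0 < r < n. Then there exists an r-dimensional k-subspace W ⊆ k^n such that {A ∈ Mat_n(k0) : A·W ⊆ W} = k0·I_n. Moreover, every r-dimensional k-subspace W ⊆ k^n with {A ∈ Mat_n(k0) : A·W ⊆ W} = k0·I_n is k0-null and k0-dense: W ∩ k0^n = 0 and W is not contained in U ⊗_{k0} k for any proper k0-subspace U ⊊ k0^n. -/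
open Polynomial


lemma four_pow_lt {u v : ℕ} (h : u < v) : 4 * 4 ^ u ≤ 4 ^ v := by
  calc 4 * 4 ^ u = 4 ^ (u + 1) := by ring
  _ ≤ 4 ^ v := Nat.pow_le_pow_right (by norm_num) (by omega)

lemma four_pow_inj {u v : ℕ} (h : 4 ^ u = 4 ^ v) : u = v :=
  Nat.pow_right_injective (by norm_num) h

lemma four_pow_add_ne (u v w : ℕ) : 4 ^ u + 4 ^ v ≠ 4 ^ w := by
  intro h
  have hpu : 0 < (4:ℕ) ^ u := by positivity
  have hpv : 0 < (4:ℕ) ^ v := by positivity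
  rcases le_total u v with huv | huv
  · have h1 : (4:ℕ) ^ u ≤ 4 ^ v := Nat.pow_le_pow_right (by norm_num) huv
    have h2 : (4:ℕ) ^ v < 4 ^ w := by omega
    have h3 : v < w := by
      by_contra hc
      push_neg at hc
      exact absurd (Nat.pow_le_pow_right (show 1 ≤ 4 by norm_num) hc) (by omega)
    have := four_pow_lt h3
    have hp : 0 < (4:ℕ) ^ v := by positivity
    omega
  · have h1 : (4:ℕ) ^ v ≤ 4 ^ u := Nat.pow_le_pow_right (by norm_num) huv
    have h2 : (4:ℕ) ^ u < 4 ^ w := by omega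
    have h3 : u < w := by
      by_contra hc
      push_neg at hc
      exact absurd (Nat.pow_le_pow_right (show 1 ≤ 4 by norm_num) hc) (by omega)
    have := four_pow_lt h3
    have hp : 0 < (4:ℕ) ^ u := by positivity
    omega

lemma four_sidon_aux {u v x y : ℕ} (h : 4 ^ u + 4 ^ v = 4 ^ x + 4 ^ y)
    (huv : u ≤ v) (hxy : x ≤ y) : u = x ∧ v = y := by
  have hpu : 0 < (4:ℕ) ^ u := by positivity
  have hpv : 0 < (4:ℕ) ^ v := by positivity
  have hpx : 0 < (4:ℕ) ^ x := by positivity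
  have hpy : 0 < (4:ℕ) ^ y := by positivity
  have hvy : v = y := by
    rcases lt_trichotomy v y with hlt | heq | hgt
    · exfalso
      have h1 : (4:ℕ) ^ u ≤ 4 ^ v := Nat.pow_le_pow_right (by norm_num) huv
      have h2 : (4:ℕ) ^ x ≤ 4 ^ y := Nat.pow_le_pow_right (by norm_num) hxy
      have := four_pow_lt hlt
      have hp : 0 < (4:ℕ) ^ v := by positivity
      omega
    · exact heq
    · exfalso
      have h1 : (4:ℕ) ^ u ≤ 4 ^ v := Nat.pow_le_pow_right (by norm_num) huv
      have h2 : (4:ℕ) ^ x ≤ 4 ^ y := Nat.pow_le_pow_right (by norm_num) hxy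
      have := four_pow_lt hgt
      have hp : 0 < (4:ℕ) ^ y := by positivity
      omega
  subst hvy
  have : (4:ℕ) ^ u = 4 ^ x := by omega
  exact ⟨four_pow_inj this, rfl⟩

lemma four_sidon {u v x y : ℕ} (h : 4 ^ u + 4 ^ v = 4 ^ x + 4 ^ y) :
    (u = x ∧ v = y) ∨ (u = y ∧ v = x) := by
  rcases le_total u v with huv | huv <;> rcases le_total x y with hxy | hxy
  · exact Or.inl (four_sidon_aux h huv hxy)
  · obtain ⟨h1, h2⟩ := four_sidon_aux (by omega) huv hxy
    exact Or.inr ⟨h1, h2⟩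
  · obtain ⟨h1, h2⟩ := four_sidon_aux (by omega) huv hxy
    exact Or.inr ⟨h2, h1⟩
  · obtain ⟨h1, h2⟩ := four_sidon_aux (by omega) huv hxy
    exact Or.inl ⟨h2, h1⟩


lemma e_inj {r : ℕ} (hr : 0 < r) {s t s' t' : ℕ} (hs : r ≤ s) (ht : t < r)
    (hs' : r ≤ s') (ht' : t' < r)
    (h : (s - r) * r + t + 1 = (s' - r) * r + t' + 1) : s = s' ∧ t = t' := by
  have h2 : (s - r) * r + t = (s' - r) * r + t' := by omega
  have htt : t = t' := by
    have e1 : ((s - r) * r + t) % r = t := by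
      rw [add_comm, Nat.add_mul_mod_self_right, Nat.mod_eq_of_lt ht]
    have e2 : ((s' - r) * r + t') % r = t' := by
      rw [add_comm, Nat.add_mul_mod_self_right, Nat.mod_eq_of_lt ht']
    rw [← e1, ← e2, h2]
  subst htt
  have h3 : (s - r) * r = (s' - r) * r := by omega
  have h4 : s - r = s' - r := Nat.eq_of_mul_eq_mul_right hr h3
  omega



-- bounded degrees + separable-ish setting: derive FiniteDimensional
theorem fd_of_bounded (k₀ k : Type*) [Field k₀] [Field k] [Algebra k₀ k]
    [PerfectField k₀]
    (halg : ∀ θ : k, IsIntegral k₀ θ) (L : ℕ)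
    (hdeg : ∀ θ : k, (minpoly k₀ θ).natDegree < L) :
    FiniteDimensional k₀ k := by
  have : Algebra.IsAlgebraic k₀ k := ⟨fun x => (halg x).isAlgebraic⟩
  have : Algebra.IsSeparable k₀ k := inferInstance
  have key : ∀ s : Finset k, LinearIndependent k₀ (fun x : s => (x : k)) → s.card ≤ L := by
    intro s hs
    set K' := IntermediateField.adjoin k₀ (s : Set k) with hK'
    have hFD : FiniteDimensional k₀ K' :=
      IntermediateField.finiteDimensional_adjoin (fun x _ => halg x)
    obtain ⟨γ, hγ⟩ := Field.exists_primitive_element k₀ K'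
    have hrank : Module.finrank k₀ K' < L := by
      rw [← IntermediateField.finrank_top' (F := k₀) (E := K'), ← hγ]
      rw [IntermediateField.adjoin.finrank (IsIntegral.of_finite k₀ γ)]
      have := minpoly.algebraMap_eq (A := k₀) (algebraMap K' k).injective γ
      rw [← this]
      exact hdeg _
    -- the elements of s, viewed inside K', are linearly independent
    have hmem : ∀ x : s, (x : k) ∈ K' :=
      fun x => IntermediateField.subset_adjoin k₀ _ x.2
    set b : s → K' := fun x => ⟨(x : k), hmem x⟩ with hb
    have hbi : LinearIndependent k₀ b := by
      have : (fun x : s => (x : k)) =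
          (IsScalarTower.toAlgHom k₀ K' k).toLinearMap ∘ b := rfl
      apply LinearIndependent.of_comp (IsScalarTower.toAlgHom k₀ K' k).toLinearMap
      rw [← this]; exact hs
    have := hbi.fintype_card_le_finrank
    simpa using this.trans hrank.le
  have : Module.rank k₀ k ≤ L := by
    apply rank_le
    intro s hs
    exact key s hs
  exact Module.rank_lt_aleph0_iff.mp (this.trans_lt (Cardinal.nat_lt_aleph0 L))

theorem exists_good (k₀ k : Type*) [Field k₀] [Field k] [IsAlgClosed k] [Algebra k₀ k]
    (hinf : ¬ FiniteDimensional k₀ k) (L : ℕ) :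
    ∃ θ : k, ∀ p : Polynomial k₀, p ≠ 0 → p.natDegree < L → Polynomial.aeval θ p ≠ 0 := by
  by_contra hcon
  push_neg at hcon
  have halg : ∀ θ : k, IsIntegral k₀ θ := by
    intro θ
    obtain ⟨p, hp0, _, hpa⟩ := hcon θ
    exact (IsAlgebraic.isIntegral ⟨p, hp0, hpa⟩)
  have hdeg : ∀ θ : k, (minpoly k₀ θ).natDegree < L := by
    intro θ
    obtain ⟨p, hp0, hpd, hpa⟩ := hcon θ
    exact lt_of_le_of_lt (Polynomial.natDegree_le_of_dvd (minpoly.dvd k₀ θ hpa) hp0) hpd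
  obtain ⟨q, hq⟩ := ExpChar.exists k₀
  cases hq with
  | zero =>
      exact hinf (fd_of_bounded k₀ k halg L hdeg)
  | prime hp =>
      haveI : ExpChar k₀ q := ExpChar.prime hp
      by_cases hsurj : Function.Surjective (frobenius k₀ q)
      · haveI : PerfectRing k₀ q := PerfectRing.ofSurjective _ _ hsurj
        haveI : PerfectField k₀ := PerfectRing.toPerfectField k₀ q
        exact hinf (fd_of_bounded k₀ k halg L hdeg)
      · -- imperfect case: construct an element of large degree
        obtain ⟨a, ha⟩ : ∃ a : k₀, ∀ b : k₀, frobenius k₀ q b ≠ a := by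
          simpa [Function.Surjective, not_forall] using hsurj
        -- b with b ^ (p ^ L) = algebraMap a
        obtain ⟨b, hb⟩ := IsAlgClosed.exists_pow_nat_eq (algebraMap k₀ k a)
          (n := q ^ L) (pow_pos hp.pos L)
        have hsep : (minpoly k₀ b).natSepDegree = 1 := by
          rw [minpoly.natSepDegree_eq_one_iff_pow_mem q]
          exact ⟨L, hb ▸ ⟨a, rfl⟩⟩
        obtain ⟨j, y, hmin⟩ := (minpoly.natSepDegree_eq_one_iff_eq_X_pow_sub_C q).1 hsep
        have hby : b ^ q ^ j = algebraMap k₀ k y := by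
          have := minpoly.aeval k₀ b
          rw [hmin] at this
          simpa [sub_eq_zero] using this
        have hdegb : (minpoly k₀ b).natDegree = q ^ j := by
          rw [hmin, Polynomial.natDegree_X_pow_sub_C]
        have hjL : j < L := by
          by_contra hjL
          push_neg at hjL
          have : L < q ^ j :=
            lt_of_lt_of_le (Nat.lt_pow_self hp.one_lt : L < q ^ L) (Nat.pow_le_pow_right hp.pos hjL)
          exact absurd (hdeg b) (by rw [hdegb]; omega)
        -- then a = y ^ (p ^ (L - j)) is a p-th power
        have hay : algebraMap k₀ k a = algebraMap k₀ k (y ^ q ^ (L - j)) := by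
          have hLj : j + (L - j) = L := by omega
          rw [← hb, map_pow, ← hby, ← pow_mul, ← pow_add, hLj]
        have hay' : a = y ^ q ^ (L - j) := (algebraMap k₀ k).injective hay
        apply ha (y ^ q ^ (L - j - 1))
        rw [frobenius_def, ← pow_mul, hay']
        have h2 : L - j - 1 + 1 = L - j := by omega
        rw [← pow_succ, h2]



/-- Let `k₀` be a field and `k` an algebraically closed field such that the extension
`k/k₀` is infinite, and let `0 < r < n`.  Then there exists an `r`-dimensional `k`-subspace
`W ⊆ k^n` such that the only matrices with entries in `k₀` preserving `W` are the scalar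
matrices.  Moreover, every `r`-dimensional `k`-subspace `W ⊆ k^n` whose `k₀`-stabilizer
consists only of scalar matrices is `k₀`-null (`W ∩ k₀^n = 0`) and `k₀`-dense (`W` is not
contained in `U ⊗_{k₀} k` for any proper `k₀`-subspace `U ⊊ k₀^n`). -/
theorem exists_subspace_with_scalar_stabilizer
    (k₀ k : Type*) [Field k₀] [Field k] [IsAlgClosed k] [Algebra k₀ k]
    (hinf : ¬ FiniteDimensional k₀ k)
    (n r : ℕ) (hr : 0 < r) (hrn : r < n) :
    (∃ W : Submodule k (Fin n → k), Module.finrank k W = r ∧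
      {A : Matrix (Fin n) (Fin n) k₀ |
          ∀ x ∈ W, (A.map (algebraMap k₀ k)).mulVec x ∈ W} =
        {A : Matrix (Fin n) (Fin n) k₀ | ∃ a : k₀, A = a • (1 : Matrix (Fin n) (Fin n) k₀)}) ∧
    (∀ W : Submodule k (Fin n → k), Module.finrank k W = r →
      {A : Matrix (Fin n) (Fin n) k₀ |
          ∀ x ∈ W, (A.map (algebraMap k₀ k)).mulVec x ∈ W} =
        {A : Matrix (Fin n) (Fin n) k₀ | ∃ a : k₀, A = a • (1 : Matrix (Fin n) (Fin n) k₀)} →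
      (∀ x ∈ W, (∀ i : Fin n, x i ∈ (algebraMap k₀ k).range) → x = 0) ∧
      (∀ U : Submodule k₀ (Fin n → k₀), U ≠ ⊤ →
        ¬ W ≤ Submodule.span k
          ((fun u : Fin n → k₀ => fun i => algebraMap k₀ k (u i)) '' (U : Set (Fin n → k₀))))) := by
  constructor
  · -- existence of a subspace with scalar stabilizer
    obtain ⟨θ, hθ⟩ := exists_good k₀ k hinf (2 * 4 ^ ((n - r) * r) + 1)
    set φ := algebraMap k₀ k with hφ
    set E : ℕ → ℕ → ℕ := fun s t => (s - r) * r + t + 1 with hE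
    set w : Fin r → (Fin n → k) := fun a i =>
      if (i : ℕ) < r then (if (i : ℕ) = (a : ℕ) then 1 else 0) else θ ^ 4 ^ E i a with hw
    set ι : Fin r → Fin n := fun b => ⟨b, lt_trans b.2 hrn⟩ with hι
    have hιcoord : ∀ (a b : Fin r), w a (ι b) = if b = a then 1 else 0 := by
      intro a b
      simp only [hw, hι]
      rw [if_pos b.2]
      by_cases h : b = a
      · simp [h]
      · rw [if_neg, if_neg h]
        simpa [Fin.ext_iff] using h
    have hicoord : ∀ (a : Fin r) (i : Fin n), r ≤ (i : ℕ) → w a i = θ ^ 4 ^ E i a := by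
      intro a i hi
      simp only [hw]
      rw [if_neg (by omega)]
    have hlin : LinearIndependent k w := by
      rw [Fintype.linearIndependent_iff]
      intro g hg a
      have := congrFun hg (ι a)
      simp only [Finset.sum_apply, Pi.smul_apply, smul_eq_mul, Pi.zero_apply] at this
      rw [Finset.sum_congr rfl (fun b _ => by rw [hιcoord b a])] at this
      simpa [mul_ite, mul_one, mul_zero] using this
    set W := Submodule.span k (Set.range w) with hWdef
    have hmemW : ∀ a : Fin r, w a ∈ W := fun a =>
      Submodule.subset_span (Set.mem_range_self a)
    have hrep : ∀ y ∈ W, y = ∑ b : Fin r, y (ι b) • w b := by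
      intro y hy
      rw [hWdef, Submodule.mem_span_range_iff_exists_fun] at hy
      obtain ⟨c, hc⟩ := hy
      have hcb : ∀ b : Fin r, c b = y (ι b) := by
        intro b
        have := congrFun hc (ι b)
        simp only [Finset.sum_apply, Pi.smul_apply, smul_eq_mul] at this
        rw [Finset.sum_congr rfl (fun b' _ => by rw [hιcoord b' b])] at this
        simpa [mul_ite, mul_one, mul_zero] using this
      calc y = ∑ b : Fin r, c b • w b := hc.symm
      _ = ∑ b : Fin r, y (ι b) • w b := Finset.sum_congr rfl (fun b _ => by rw [hcb b])
    have hEub : ∀ s t : ℕ, s < n → t < r → E s t ≤ (n - r) * r := by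
      intro s t hs ht
      have h1 : s - r ≤ n - 1 - r := by omega
      have h2 : (s - r) * r ≤ (n - 1 - r) * r := Nat.mul_le_mul_right r h1
      have h3 : (n - 1 - r) * r + r = (n - r) * r := by
        have h4 : (n - 1 - r) + 1 = n - r := by omega
        calc (n - 1 - r) * r + r = ((n - 1 - r) + 1) * r := by ring
        _ = (n - r) * r := by rw [h4]
      simp only [hE]
      omega
    have hEinj : ∀ s t s' t' : ℕ, r ≤ s → t < r → r ≤ s' → t' < r →
        E s t = E s' t' → s = s' ∧ t = t' := by
      intro s t s' t' hs ht hs' ht' h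
      exact e_inj hr hs ht hs' ht' h
    refine ⟨W, ?_, ?_⟩
    · rw [hWdef, finrank_span_eq_card hlin, Fintype.card_fin]
    · ext A
      simp only [Set.mem_setOf_eq]
      have hmv : ∀ (x : Fin n → k) (z : Fin n), ((A.map φ).mulVec x) z = ∑ j, φ (A z j) * x j := by
        intro x z
        simp [Matrix.mulVec, dotProduct, Matrix.map_apply]
      constructor
      · intro hA
        have main : ∀ (a : Fin r) (i : Fin n), r ≤ (i : ℕ) →
            (A i (ι a) = 0)
            ∧ (∀ j0 : Fin n, r ≤ (j0 : ℕ) → j0 ≠ i → A i j0 = 0)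
            ∧ (A i i = A (ι a) (ι a))
            ∧ (∀ b0 : Fin r, (b0 : ℕ) ≠ (a : ℕ) → A (ι b0) (ι a) = 0)
            ∧ (∀ b0 : Fin r, ∀ j0 : Fin n, r ≤ (j0 : ℕ) → A (ι b0) j0 = 0) := by
          intro a i hi
          set y := (A.map φ).mulVec (w a) with hy
          have hyW : y ∈ W := hA (w a) (hmemW a)
          set Q : Fin n → Polynomial k₀ := fun z =>
            ∑ j : Fin n, if (j : ℕ) < r then (if (j : ℕ) = (a : ℕ) then C (A z j) else 0)
              else C (A z j) * X ^ 4 ^ E j a with hQ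
          have hQeval : ∀ z : Fin n, aeval θ (Q z) = y z := by
            intro z
            rw [hy, hmv, hQ, map_sum]
            apply Finset.sum_congr rfl
            intro j _
            by_cases h1 : (j : ℕ) < r
            · by_cases h2 : (j : ℕ) = (a : ℕ)
              · rw [if_pos h1, if_pos h2, aeval_C]
                simp only [hw]
                rw [if_pos h1, if_pos h2, mul_one, hφ]
              · rw [if_pos h1, if_neg h2, map_zero]
                simp only [hw]
                rw [if_pos h1, if_neg h2, mul_zero]
            · rw [if_neg h1, map_mul, aeval_C, map_pow, aeval_X]
              simp only [hw]
              rw [if_neg h1, hφ]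
          have hQdeg : ∀ z, (Q z).natDegree ≤ 4 ^ ((n - r) * r) := by
            intro z
            rw [hQ]
            apply Polynomial.natDegree_sum_le_of_forall_le
            intro j _
            by_cases h1 : (j : ℕ) < r
            · by_cases h2 : (j : ℕ) = (a : ℕ)
              · rw [if_pos h1, if_pos h2]
                simp [Polynomial.natDegree_C]
              · rw [if_pos h1, if_neg h2]
                simp
            · rw [if_neg h1]
              refine le_trans (Polynomial.natDegree_C_mul_le _ _) ?_
              rw [Polynomial.natDegree_X_pow]
              exact Nat.pow_le_pow_right (by norm_num) (hEub j a j.2 a.2)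
          have hQc0 : ∀ z, (Q z).coeff 0 = A z (ι a) := by
            intro z
            rw [hQ, Polynomial.finset_sum_coeff]
            rw [Finset.sum_eq_single (ι a)]
            · rw [if_pos (show ((ι a : Fin n) : ℕ) < r from a.2),
                if_pos (show ((ι a : Fin n) : ℕ) = (a : ℕ) from rfl), Polynomial.coeff_C_zero]
            · intro j _ hj
              by_cases h1 : (j : ℕ) < r
              · by_cases h2 : (j : ℕ) = (a : ℕ)
                · exact absurd (Fin.ext h2 : j = ι a) hj
                · rw [if_pos h1, if_neg h2, Polynomial.coeff_zero]
              · rw [if_neg h1, Polynomial.coeff_C_mul, Polynomial.coeff_X_pow,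
                  if_neg ((by positivity : (0:ℕ) < 4 ^ E ↑j ↑a).ne), mul_zero]
            · intro h; exact absurd (Finset.mem_univ _) h
          have hQcpow : ∀ z (j0 : Fin n), r ≤ (j0 : ℕ) → (Q z).coeff (4 ^ E j0 a) = A z j0 := by
            intro z j0 hj0
            rw [hQ, Polynomial.finset_sum_coeff]
            rw [Finset.sum_eq_single j0]
            · rw [if_neg (not_lt.mpr hj0), Polynomial.coeff_C_mul, Polynomial.coeff_X_pow,
                if_pos rfl, mul_one]
            · intro j _ hj
              by_cases h1 : (j : ℕ) < r
              · by_cases h2 : (j : ℕ) = (a : ℕ)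
                · rw [if_pos h1, if_pos h2, Polynomial.coeff_C,
                    if_neg ((by positivity : (0:ℕ) < 4 ^ E ↑j0 ↑a).ne')]
                · rw [if_pos h1, if_neg h2, Polynomial.coeff_zero]
              · rw [if_neg h1, Polynomial.coeff_C_mul, Polynomial.coeff_X_pow, if_neg, mul_zero]
                intro hc
                have := four_pow_inj hc
                obtain ⟨h3, -⟩ := hEinj j0 a j a hj0 a.2 (not_lt.mp h1) a.2 this
                exact hj (Fin.ext h3.symm)
            · intro h; exact absurd (Finset.mem_univ _) h
          have hQczero : ∀ z m, m ≠ 0 → (∀ j : Fin n, r ≤ (j : ℕ) → m ≠ 4 ^ E j a) →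
              (Q z).coeff m = 0 := by
            intro z m hm0 hmp
            rw [hQ, Polynomial.finset_sum_coeff]
            apply Finset.sum_eq_zero
            intro j _
            by_cases h1 : (j : ℕ) < r
            · by_cases h2 : (j : ℕ) = (a : ℕ)
              · rw [if_pos h1, if_pos h2, Polynomial.coeff_C, if_neg hm0]
              · rw [if_pos h1, if_neg h2, Polynomial.coeff_zero]
            · rw [if_neg h1, Polynomial.coeff_C_mul, Polynomial.coeff_X_pow,
                if_neg (hmp j (not_lt.mp h1)), mul_zero]
          set P : Polynomial k₀ := Q i - ∑ b : Fin r, Q (ι b) * X ^ 4 ^ E i b with hP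
          have hPeval : aeval θ P = 0 := by
            rw [hP, map_sub]
            have h2 : ∀ b : Fin r, aeval θ (Q (ι b) * X ^ 4 ^ E i b)
                = y (ι b) * θ ^ 4 ^ E i b := by
              intro b
              rw [map_mul, hQeval, map_pow, aeval_X]
            rw [hQeval i, map_sum, Finset.sum_congr rfl (fun b _ => h2 b)]
            have h3 := congrFun (hrep y hyW) i
            simp only [Finset.sum_apply, Pi.smul_apply, smul_eq_mul] at h3
            rw [Finset.sum_congr rfl (fun b _ => by rw [hicoord b i hi])] at h3
            rw [← h3, sub_self]
          have hPdeg : P.natDegree < 2 * 4 ^ ((n - r) * r) + 1 := by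
            have h1 : P.natDegree ≤ 2 * 4 ^ ((n - r) * r) := by
              rw [hP]
              refine le_trans (Polynomial.natDegree_sub_le _ _) (max_le ?_ ?_)
              · exact le_trans (hQdeg i) (by omega)
              · apply Polynomial.natDegree_sum_le_of_forall_le
                intro b _
                refine le_trans (Polynomial.natDegree_mul_le) ?_
                rw [Polynomial.natDegree_X_pow]
                have := hQdeg (ι b)
                have h4 : 4 ^ E i b ≤ 4 ^ ((n - r) * r) :=
                  Nat.pow_le_pow_right (by norm_num) (hEub i b i.2 b.2)
                omega
            omega
          have hP0 : P = 0 := by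
            by_contra hne
            exact hθ P hne hPdeg hPeval
          have hcoeff : ∀ m : ℕ, (Q i).coeff m =
              ∑ b : Fin r, if 4 ^ E i b ≤ m then (Q (ι b)).coeff (m - 4 ^ E i b) else 0 := by
            intro m
            have h0 := congrArg (fun p : Polynomial k₀ => p.coeff m) hP0
            simp only [hP, Polynomial.coeff_sub, Polynomial.coeff_zero,
              Polynomial.finset_sum_coeff, Polynomial.coeff_mul_X_pow'] at h0
            have := sub_eq_zero.mp h0
            exact this
          refine ⟨?_, ?_, ?_, ?_, ?_⟩
          · -- A i (ι a) = 0
            have h := hcoeff 0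
            rw [hQc0 i] at h
            rw [h]
            apply Finset.sum_eq_zero
            intro b _
            rw [if_neg]
            exact not_le.mpr (by positivity)
          · -- off-diagonal in bottom-right block
            intro j0 hj0 hne
            have h := hcoeff (4 ^ E ↑j0 ↑a)
            rw [hQcpow i j0 hj0] at h
            rw [h]
            apply Finset.sum_eq_zero
            intro b _
            by_cases hle : 4 ^ E ↑i ↑b ≤ 4 ^ E ↑j0 ↑a
            · rw [if_pos hle]
              rcases eq_or_lt_of_le hle with heq | hlt
              · exfalso
                obtain ⟨h3, h4⟩ := hEinj i b j0 a hi b.2 hj0 a.2 (four_pow_inj heq)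
                exact hne (Fin.ext h3.symm)
              · apply hQczero
                · omega
                · intro j hj hc
                  exact four_pow_add_ne (E ↑j ↑a) (E ↑i ↑b) (E ↑j0 ↑a) (by omega)
            · rw [if_neg hle]
          · -- diagonal entries agree
            have h := hcoeff (4 ^ E ↑i ↑a)
            rw [hQcpow i i hi] at h
            rw [h]
            rw [Finset.sum_eq_single a]
            · rw [if_pos le_rfl, Nat.sub_self, hQc0 (ι a)]
            · intro b _ hb
              by_cases hle : 4 ^ E ↑i ↑b ≤ 4 ^ E ↑i ↑a
              · rcases eq_or_lt_of_le hle with heq | hlt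
                · exfalso
                  obtain ⟨-, h4⟩ := hEinj i b i a hi b.2 hi a.2 (four_pow_inj heq)
                  exact hb (Fin.ext h4)
                · rw [if_pos hle]
                  apply hQczero
                  · omega
                  · intro j hj hc
                    exact four_pow_add_ne (E ↑j ↑a) (E ↑i ↑b) (E ↑i ↑a) (by omega)
              · rw [if_neg hle]
            · intro h'; exact absurd (Finset.mem_univ _) h'
          · -- off-diagonal in top-left block
            intro b0 hb0
            have hL : (Q i).coeff (4 ^ E ↑i ↑b0) = 0 := by
              apply hQczero
              · exact (by positivity : (0:ℕ) < 4 ^ E ↑i ↑b0).ne'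
              · intro j hj hc
                obtain ⟨-, h4⟩ := hEinj i b0 j a hi b0.2 hj a.2 (four_pow_inj hc)
                exact hb0 h4
            have h := hcoeff (4 ^ E ↑i ↑b0)
            rw [hL] at h
            have hs : (∑ b : Fin r, if 4 ^ E ↑i ↑b ≤ 4 ^ E ↑i ↑b0 then
                (Q (ι b)).coeff (4 ^ E ↑i ↑b0 - 4 ^ E ↑i ↑b) else 0) = A (ι b0) (ι a) := by
              rw [Finset.sum_eq_single b0]
              · rw [if_pos le_rfl, Nat.sub_self, hQc0 (ι b0)]
              · intro b _ hb
                by_cases hle : 4 ^ E ↑i ↑b ≤ 4 ^ E ↑i ↑b0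
                · rcases eq_or_lt_of_le hle with heq | hlt
                  · exfalso
                    obtain ⟨-, h4⟩ := hEinj i b i b0 hi b.2 hi b0.2 (four_pow_inj heq)
                    exact hb (Fin.ext h4)
                  · rw [if_pos hle]
                    apply hQczero
                    · omega
                    · intro j hj hc
                      exact four_pow_add_ne (E ↑j ↑a) (E ↑i ↑b) (E ↑i ↑b0) (by omega)
                · rw [if_neg hle]
              · intro h'; exact absurd (Finset.mem_univ _) h'
            rw [hs] at h
            exact h.symm
          · -- top-right block vanishes
            intro b0 j0 hj0
            have hL : (Q i).coeff (4 ^ E ↑i ↑b0 + 4 ^ E ↑j0 ↑a) = 0 := by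
              apply hQczero
              · positivity
              · intro j hj hc
                exact four_pow_add_ne (E ↑i ↑b0) (E ↑j0 ↑a) (E ↑j ↑a) (by omega)
            have h := hcoeff (4 ^ E ↑i ↑b0 + 4 ^ E ↑j0 ↑a)
            rw [hL] at h
            have hs : (∑ b : Fin r, if 4 ^ E ↑i ↑b ≤ 4 ^ E ↑i ↑b0 + 4 ^ E ↑j0 ↑a then
                (Q (ι b)).coeff (4 ^ E ↑i ↑b0 + 4 ^ E ↑j0 ↑a - 4 ^ E ↑i ↑b) else 0)
                = A (ι b0) j0 := by
              rw [Finset.sum_eq_single b0]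
              · rw [if_pos (Nat.le_add_right _ _), Nat.add_sub_cancel_left, hQcpow (ι b0) j0 hj0]
              · intro b _ hb
                by_cases hle : 4 ^ E ↑i ↑b ≤ 4 ^ E ↑i ↑b0 + 4 ^ E ↑j0 ↑a
                · rw [if_pos hle]
                  apply hQczero
                  · intro h0
                    exact four_pow_add_ne (E ↑i ↑b0) (E ↑j0 ↑a) (E ↑i ↑b) (by omega)
                  · intro j hj hc
                    have hsum : 4 ^ E ↑i ↑b + 4 ^ E ↑j ↑a
                        = 4 ^ E ↑i ↑b0 + 4 ^ E ↑j0 ↑a := by omega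
                    rcases four_sidon hsum with ⟨h1, h2⟩ | ⟨h1, h2⟩
                    · obtain ⟨-, hbb⟩ := hEinj i b i b0 hi b.2 hi b0.2 h1
                      exact hb (Fin.ext hbb)
                    · obtain ⟨-, hba⟩ := hEinj i b j0 a hi b.2 hj0 a.2 h1
                      obtain ⟨-, hab0⟩ := hEinj j a i b0 hj a.2 hi b0.2 h2
                      exact hb (Fin.ext (hba.trans hab0))
                · rw [if_neg hle]
              · intro h'; exact absurd (Finset.mem_univ _) h'
            rw [hs] at h
            exact h.symm
        have hα := main
        refine ⟨A (ι ⟨0, hr⟩) (ι ⟨0, hr⟩), ?_⟩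
        have hent : ∀ s t : Fin n, A s t
            = if s = t then A (ι ⟨0, hr⟩) (ι ⟨0, hr⟩) else 0 := by
          intro s t
          by_cases hst : s = t
          · subst hst
            rw [if_pos rfl]
            by_cases hsr : (s : ℕ) < r
            · have hse : s = ι ⟨(s : ℕ), hsr⟩ := Fin.ext rfl
              have h1 := (main ⟨(s : ℕ), hsr⟩ ⟨r, hrn⟩ (le_refl r)).2.2.1
              have h2 := (main ⟨0, hr⟩ ⟨r, hrn⟩ (le_refl r)).2.2.1
              rw [hse, ← h1, h2]
            · exact (main ⟨0, hr⟩ s (not_lt.mp hsr)).2.2.1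
          · rw [if_neg hst]
            by_cases hsr : (s : ℕ) < r <;> by_cases htr : (t : ℕ) < r
            · have hse : s = ι ⟨(s : ℕ), hsr⟩ := Fin.ext rfl
              have hte : t = ι ⟨(t : ℕ), htr⟩ := Fin.ext rfl
              have hne : ((⟨(s : ℕ), hsr⟩ : Fin r) : ℕ) ≠ ((⟨(t : ℕ), htr⟩ : Fin r) : ℕ) := by
                simpa [Fin.ext_iff] using hst
              rw [hse, hte]
              exact (main ⟨(t : ℕ), htr⟩ ⟨r, hrn⟩ (le_refl r)).2.2.2.1 ⟨(s : ℕ), hsr⟩ hne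
            · have hse : s = ι ⟨(s : ℕ), hsr⟩ := Fin.ext rfl
              rw [hse]
              exact (main ⟨0, hr⟩ ⟨r, hrn⟩ (le_refl r)).2.2.2.2 ⟨(s : ℕ), hsr⟩ t (not_lt.mp htr)
            · have hte : t = ι ⟨(t : ℕ), htr⟩ := Fin.ext rfl
              rw [hte]
              exact (main ⟨(t : ℕ), htr⟩ s (not_lt.mp hsr)).1
            · exact (main ⟨0, hr⟩ s (not_lt.mp hsr)).2.1 t (not_lt.mp htr) (Ne.symm hst)
        ext s t
        rw [Matrix.smul_apply, Matrix.one_apply, hent s t]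
        by_cases hst : s = t <;> simp [hst]
      · rintro ⟨a, rfl⟩ x hx
        have : ((a • (1 : Matrix (Fin n) (Fin n) k₀)).map φ).mulVec x = φ a • x := by
          funext s
          rw [hmv]
          simp only [Matrix.smul_apply, Matrix.one_apply, smul_eq_mul, Pi.smul_apply]
          rw [Finset.sum_eq_single s]
          · rw [if_pos rfl, mul_one]
          · intro t _ ht
            rw [if_neg (Ne.symm ht), mul_zero, map_zero, zero_mul]
          · intro h; exact absurd (Finset.mem_univ _) h
        rw [this]
        exact W.smul_mem _ hx

  · -- every such subspace is k₀-null and k₀-dense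
    intro W hWrank heq
    have hscal : ∀ A : Matrix (Fin n) (Fin n) k₀,
        (∀ x ∈ W, (A.map (algebraMap k₀ k)).mulVec x ∈ W) →
        ∃ a : k₀, A = a • (1 : Matrix (Fin n) (Fin n) k₀) := by
      intro A hA
      have : A ∈ {A : Matrix (Fin n) (Fin n) k₀ |
          ∀ x ∈ W, (A.map (algebraMap k₀ k)).mulVec x ∈ W} := hA
      rw [heq] at this
      exact this
    constructor
    · -- k₀-null
      intro x hx hcoord
      choose v hv using hcoord
      -- show each coordinate of v is zero
      have hv0 : ∀ i : Fin n, v i = 0 := by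
        intro i
        -- choose j0 ≠ i
        haveI : Nontrivial (Fin n) := by
          apply Fin.nontrivial_iff_two_le.mpr
          omega
        obtain ⟨j0, hj0⟩ : ∃ j0 : Fin n, j0 ≠ i := exists_ne i
        set A : Matrix (Fin n) (Fin n) k₀ := Matrix.of fun s t => if t = j0 then v s else 0 with hAdef
        have hA : ∀ y ∈ W, (A.map (algebraMap k₀ k)).mulVec y ∈ W := by
          intro y hy
          have : (A.map (algebraMap k₀ k)).mulVec y = y j0 • x := by
            funext s
            simp only [Matrix.mulVec, dotProduct, Matrix.map_apply, hAdef, Matrix.of_apply]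
            rw [Finset.sum_eq_single j0]
            · simp [hv s, mul_comm]
            · intro t _ ht; simp [ht]
            · intro h; exact absurd (Finset.mem_univ j0) h
          rw [this]
          exact W.smul_mem _ hx
        obtain ⟨a, ha⟩ := hscal A hA
        have := congrFun (congrFun ha i) j0
        simp only [hAdef, Matrix.of_apply, if_pos rfl, Matrix.smul_apply, Matrix.one_apply,
          if_neg (Ne.symm hj0)] at this
        simpa using this
      funext i
      rw [← hv i, hv0 i, map_zero, Pi.zero_apply]
    · -- k₀-dense
      intro U hU hle
      -- find a functional vanishing on U but not everywhere
      obtain ⟨w0, hw0⟩ : ∃ w0 : Fin n → k₀, w0 ∉ U := by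
        by_contra h
        push_neg at h
        exact hU (Submodule.eq_top_iff'.2 h)
      have hq0 : U.mkQ w0 ≠ 0 := by
        simpa [Submodule.Quotient.mk_eq_zero] using hw0
      obtain ⟨g, hg⟩ : ∃ g : ((Fin n → k₀) ⧸ U) →ₗ[k₀] k₀, g (U.mkQ w0) ≠ 0 := by
        by_contra h
        push_neg at h
        exact hq0 ((Module.forall_dual_apply_eq_zero_iff k₀ _).1 h)
      set ψ : (Fin n → k₀) →ₗ[k₀] k₀ := g.comp U.mkQ with hψdef
      have hψU : ∀ u ∈ U, ψ u = 0 := by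
        intro u hu
        simp [hψdef, (Submodule.Quotient.mk_eq_zero U).2 hu, Submodule.mkQ_apply]
      set c : Fin n → k₀ := fun j => ψ (fun j' => if j = j' then 1 else 0) with hcdef
      have hψeq : ∀ u : Fin n → k₀, ψ u = ∑ j, u j * c j := by
        intro u
        rw [LinearMap.pi_apply_eq_sum_univ ψ u]
        simp only [hcdef, smul_eq_mul]
      obtain ⟨j1, hj1⟩ : ∃ j1 : Fin n, c j1 ≠ 0 := by
        by_contra h
        push_neg at h
        apply hg
        have := hψeq w0
        simp only [h, mul_zero, Finset.sum_const_zero] at this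
        simpa [hψdef] using this
      haveI : Nontrivial (Fin n) := by
        apply Fin.nontrivial_iff_two_le.mpr
        omega
      obtain ⟨i1, hi1⟩ : ∃ i1 : Fin n, i1 ≠ j1 := exists_ne j1
      -- the k-linear functional x ↦ ∑ j, algebraMap (c j) * x j vanishes on W
      have hvan : ∀ x ∈ W, ∑ j, algebraMap k₀ k (c j) * x j = 0 := by
        have hvan' : ∀ x ∈ Submodule.span k
            ((fun u : Fin n → k₀ => fun i => algebraMap k₀ k (u i)) '' (U : Set (Fin n → k₀))),
            ∑ j, algebraMap k₀ k (c j) * x j = 0 := by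
          intro x hx
          induction hx using Submodule.span_induction with
          | mem z hz =>
            obtain ⟨u, hu, rfl⟩ := hz
            have : ∑ j, algebraMap k₀ k (c j) * algebraMap k₀ k (u j)
                = algebraMap k₀ k (ψ u) := by
              rw [hψeq u, map_sum]
              congr 1; funext j
              rw [map_mul, mul_comm]
            exact this.trans (by rw [hψU u hu, map_zero])
          | zero => simp
          | add y z _ _ hy hz =>
            have : ∀ j, algebraMap k₀ k (c j) * (y + z) j
                = algebraMap k₀ k (c j) * y j + algebraMap k₀ k (c j) * z j := by
              intro j; simp [mul_add]
            rw [Finset.sum_congr rfl (fun j _ => this j), Finset.sum_add_distrib, hy, hz, add_zero]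
          | smul t y _ hy =>
            have : ∀ j, algebraMap k₀ k (c j) * (t • y) j
                = t * (algebraMap k₀ k (c j) * y j) := by
              intro j; simp [smul_eq_mul]; ring
            rw [Finset.sum_congr rfl (fun j _ => this j), ← Finset.mul_sum, hy, mul_zero]
        exact fun x hx => hvan' x (hle hx)
      set A : Matrix (Fin n) (Fin n) k₀ := Matrix.of fun s t => if s = i1 then c t else 0 with hAdef
      have hA : ∀ y ∈ W, (A.map (algebraMap k₀ k)).mulVec y ∈ W := by
        intro y hy
        have : (A.map (algebraMap k₀ k)).mulVec y = 0 := by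
          funext s
          simp only [Matrix.mulVec, dotProduct, Matrix.map_apply, hAdef, Matrix.of_apply,
            Pi.zero_apply]
          by_cases hs : s = i1
          · simp only [hs, if_pos rfl]
            exact hvan y hy
          · simp [hs]
        rw [this]
        exact W.zero_mem
      obtain ⟨a, ha⟩ := hscal A hA
      have := congrFun (congrFun ha i1) j1
      simp only [hAdef, Matrix.of_apply, if_pos rfl, Matrix.smul_apply, Matrix.one_apply,
        if_neg hi1] at this
      simp only [smul_zero] at this
      exact hj1 this
end

section
/- Let k0 be a field, k an algebraically closed field containing k0, and equip V0 = k0^{2r} with the standard symplectic form ψ0 given by the matrix J = [[0, I_r],[−I_r, 0]] in the basis e_1,…,e_r, e'_1,…,e'_r. Let H ⊆ Sp(V0) be the subgroup generated by the elements ε_i (1 ≤ i ≤ r), defined by ε_i(e_i) = e'_i, ε_i(e'_i) = −e_i and ε_i fixing all other basis vectors, together with the permutation elements σ ∈ S_r acting by σ(e_i) = e_{σ(i)}, σ(e'_i) = e'_{σ(i)}. Then for every maximal isotropic (r-dimensional, totally isotropic for the k-bilinear extension of ψ0) k-subspace W ⊆ k^{2r}, there exists γ ∈ H such that the projection of γ·W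 onto the first r coordinates is an isomorphism of k-vector spaces. -/
/-- The matrix of the symplectic transformation `ε_i` sending `e_i ↦ e'_i`, `e'_i ↦ −e_i`
and fixing all other basis vectors, where `e_i = inl i` and `e'_i = inr i`. -/
def epsMat (k₀ : Type*) [Field k₀] (r : ℕ) (i : Fin r) :
    Matrix (Fin r ⊕ Fin r) (Fin r ⊕ Fin r) k₀ :=
  Matrix.of fun a b =>
    if a = Sum.inl i ∧ b = Sum.inr i then -1
    else if a = Sum.inr i ∧ b = Sum.inl i then 1
    else if a = b ∧ a ≠ Sum.inl i ∧ a ≠ Sum.inr i then 1 else 0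

/-- The permutation matrix of `σ ∈ S_r` acting by `e_i ↦ e_{σ(i)}` and `e'_i ↦ e'_{σ(i)}`. -/
def permMat (k₀ : Type*) [Field k₀] (r : ℕ) (σ : Equiv.Perm (Fin r)) :
    Matrix (Fin r ⊕ Fin r) (Fin r ⊕ Fin r) k₀ :=
  Matrix.of fun a b => if a = Equiv.sumCongr σ σ b then 1 else 0

/-- The subgroup `H = ⟨ε_1, …, ε_r⟩ · S_r` of `GL_{2r}(k₀)` generated by the `ε_i` and the
permutation matrices. -/
def weylSubgroup (k₀ : Type*) [Field k₀] (r : ℕ) :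
    Subgroup (Matrix (Fin r ⊕ Fin r) (Fin r ⊕ Fin r) k₀)ˣ :=
  Subgroup.closure
    {γ : (Matrix (Fin r ⊕ Fin r) (Fin r ⊕ Fin r) k₀)ˣ |
      (∃ i : Fin r, (γ : Matrix (Fin r ⊕ Fin r) (Fin r ⊕ Fin r) k₀) = epsMat k₀ r i) ∨
      (∃ σ : Equiv.Perm (Fin r),
        (γ : Matrix (Fin r ⊕ Fin r) (Fin r ⊕ Fin r) k₀) = permMat k₀ r σ)}

open Sum Matrix Module Function

lemma epsMat_apply (F : Type*) [Field F] (r : ℕ) (i : Fin r) (a b : Fin r ⊕ Fin r) :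
    epsMat F r i a b =
      if b = Equiv.swap (inl i) (inr i) a then (if a = inl i then (-1 : F) else 1) else 0 := by
  unfold epsMat
  simp only [Matrix.of_apply]
  by_cases h1 : a = Sum.inl i <;> by_cases h2 : a = Sum.inr i <;>
    simp_all [Equiv.swap_apply_def] <;> aesop

lemma epsMat_mul_transpose (F : Type*) [Field F] (r : ℕ) (i : Fin r) :
    epsMat F r i * (epsMat F r i)ᵀ = 1 := by
  ext a b
  by_cases hab : a = b
  · subst hab
    by_cases h : a = inl i <;>
      simp [Matrix.mul_apply, epsMat_apply, ite_mul, zero_mul, mul_ite, mul_zero,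
        Finset.sum_ite_eq', h, Matrix.one_apply_eq]
  · have h2 : ¬ (Equiv.swap (inl i) (inr i)) b = (Equiv.swap (inl i) (inr i)) a :=
      fun h => hab ((Equiv.swap (inl i) (inr i)).injective h).symm
    simp [Matrix.mul_apply, epsMat_apply, ite_mul, zero_mul, mul_ite, mul_zero,
      Finset.sum_ite_eq', Matrix.one_apply_ne hab, h2]

lemma epsMat_mulVec (F : Type*) [Field F] (r : ℕ) (i : Fin r) (y : Fin r ⊕ Fin r → F) :
    epsMat F r i *ᵥ y =
      fun a => (if a = inl i then (-1 : F) else 1) * y (Equiv.swap (inl i) (inr i) a) := by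
  funext a
  simp [Matrix.mulVec, dotProduct, epsMat_apply, ite_mul, zero_mul, Finset.sum_ite_eq',
    mul_comm]

/-- `ε_i` as a unit of the matrix ring. -/
def epsUnit (F : Type*) [Field F] (r : ℕ) (i : Fin r) :
    (Matrix (Fin r ⊕ Fin r) (Fin r ⊕ Fin r) F)ˣ :=
  ⟨epsMat F r i, (epsMat F r i)ᵀ, epsMat_mul_transpose F r i,
    mul_eq_one_comm.mp (epsMat_mul_transpose F r i)⟩

lemma epsMat_map {k₀ k : Type*} [Field k₀] [Field k] (φ : k₀ →+* k) (r : ℕ) (i : Fin r) :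
    (epsMat k₀ r i).map φ = epsMat k r i := by
  ext a b
  simp [epsMat, Matrix.map_apply, apply_ite φ]

/-- The result of applying `∏_{i ∈ l} ε_i` to a vector. -/
def flipVec {F : Type*} [Field F] {r : ℕ} (l : List (Fin r)) (y : Fin r ⊕ Fin r → F) :
    Fin r ⊕ Fin r → F
  | Sum.inl i => if i ∈ l then -(y (Sum.inr i)) else y (Sum.inl i)
  | Sum.inr i => if i ∈ l then y (Sum.inl i) else y (Sum.inr i)

lemma prod_eps_mulVec {F : Type*} [Field F] {r : ℕ} (l : List (Fin r)) (hl : l.Nodup)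
    (y : Fin r ⊕ Fin r → F) :
    (l.map (epsMat F r)).prod *ᵥ y = flipVec l y := by
  induction l with
  | nil =>
    funext a
    cases a <;> simp [flipVec]
  | cons j t ih =>
    have hjt : j ∉ t := (List.nodup_cons.mp hl).1
    have ht : t.Nodup := (List.nodup_cons.mp hl).2
    funext a
    rw [List.map_cons, List.prod_cons, ← Matrix.mulVec_mulVec, ih ht, epsMat_mulVec]
    cases a with
    | inl i =>
      by_cases hij : i = j
      · subst hij
        simp [flipVec, Equiv.swap_apply_left, hjt]
      · have h1 : (inl i : Fin r ⊕ Fin r) ≠ inl j := by simpa using hij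
        have h2 : (inl i : Fin r ⊕ Fin r) ≠ inr j := by simp
        simp [flipVec, Equiv.swap_apply_of_ne_of_ne h1 h2, h1, hij]
    | inr i =>
      by_cases hij : i = j
      · subst hij
        simp [flipVec, Equiv.swap_apply_right, hjt]
      · have h1 : (inr i : Fin r ⊕ Fin r) ≠ inl j := by simp
        have h2 : (inr i : Fin r ⊕ Fin r) ≠ inr j := by simpa using hij
        simp [flipVec, Equiv.swap_apply_of_ne_of_ne h1 h2, h1, hij]
open Module Function

lemma exists_coord_chart {k : Type*} [Field k] {ι : Type*} [Fintype ι] [DecidableEq ι]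
    (A : Submodule k (ι → k)) :
    ∃ S : Finset ι, Function.Bijective
      (fun (x : A) => (fun i : S => (x : ι → k) i.1)) := by
  classical
  -- coordinate functionals on `A`
  let f : ι → Module.Dual k A := fun i => (LinearMap.proj i).comp A.subtype
  -- they span the whole dual space
  have hspan : Submodule.span k (Set.range f) = ⊤ := by
    set U := Submodule.span k (Set.range f)
    have hco : U.dualCoannihilator = ⊥ := by
      rw [Submodule.eq_bot_iff]
      intro x hx
      rw [Submodule.mem_dualCoannihilator] at hx
      have : ∀ i, (x : ι → k) i = 0 := fun i =>
        hx (f i) (Submodule.subset_span ⟨i, rfl⟩)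
      exact Subtype.ext (funext this)
    have hfr := Subspace.finrank_add_finrank_dualCoannihilator_eq U
    rw [hco, finrank_bot, add_zero] at hfr
    exact Submodule.eq_top_of_finrank_eq (by rw [hfr, Subspace.dual_finrank_eq])
  obtain ⟨b, hbsub, hbspan, hbind⟩ := exists_linearIndependent k (Set.range f)
  rw [hspan] at hbspan
  have hbfin : b.Finite := hbind.setFinite
  haveI : Fintype b := hbfin.fintype
  have hsec : ∀ y : b, ∃ i : ι, f i = (y : Module.Dual k A) := fun y => hbsub y.2
  choose g hg using hsec
  have hginj : Function.Injective g := fun y₁ y₂ h => by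
    apply Subtype.ext
    rw [← hg y₁, ← hg y₂, h]
  let S : Finset ι := Finset.image g Finset.univ
  have hinj : Function.Injective (fun (x : A) => (fun i : S => (x : ι → k) i.1)) := by
    intro x₁ x₂ hx
    have hzero : ∀ i : S, ((x₁ - x₂ : A) : ι → k) i.1 = 0 := by
      intro i
      have := congrFun hx i
      simp only [Submodule.coe_sub, Pi.sub_apply]
      exact sub_eq_zero.mpr this
    have hball : ∀ φ : Module.Dual k A, φ (x₁ - x₂) = 0 := by
      intro φ
      have hφ : φ ∈ Submodule.span k b := by rw [hbspan]; trivial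
      induction hφ using Submodule.span_induction with
      | mem y hy =>
        have hyS : g ⟨y, hy⟩ ∈ S := Finset.mem_image_of_mem g (Finset.mem_univ _)
        have hgy : f (g ⟨y, hy⟩) = y := hg ⟨y, hy⟩
        have : y (x₁ - x₂) = ((x₁ - x₂ : A) : ι → k) (g ⟨y, hy⟩) := by
          exact (DFunLike.congr_fun hgy (x₁ - x₂)).symm
        rw [this]
        exact hzero ⟨_, hyS⟩
      | zero => simp
      | add φ ψ _ _ h1 h2 => simp [h1, h2]
      | smul c φ _ h1 => simp [h1]
    have : ∀ i, ((x₁ - x₂ : A) : ι → k) i = 0 := fun i => hball (f i)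
    have hze : (x₁ - x₂ : A) = 0 := Subtype.ext (funext this)
    exact sub_eq_zero.mp hze
  -- surjectivity via dimension count
  have hcardS : S.card = Fintype.card b :=
    (Finset.card_image_of_injective _ hginj).trans Finset.card_univ
  have hfrA : finrank k A = S.card := by
    have h1 : finrank k A = finrank k (Module.Dual k A) := Subspace.dual_finrank_eq.symm
    have h2 : finrank k (Module.Dual k A) = finrank k (Submodule.span k b) := by
      rw [hbspan, finrank_top]
    have h3 : finrank k (Submodule.span k b) = b.toFinset.card :=
      finrank_span_set_eq_card hbind
    rw [h1, h2, h3, Set.toFinset_card, hcardS]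
  let ρ : A →ₗ[k] (S → k) := LinearMap.pi (fun i : S => (LinearMap.proj i.1).comp A.subtype)
  have hρinj : Function.Injective ρ := fun x₁ x₂ h => hinj h
  have heq : finrank k A = finrank k (S → k) := by
    rw [hfrA, Module.finrank_pi, Fintype.card_coe]
  have hsurj : Function.Surjective ρ :=
    (LinearMap.injective_iff_surjective_of_finrank_eq_finrank heq).mp hρinj
  exact ⟨S, hinj, hsurj⟩


/-- Let `k₀` be a field, `k` an algebraically closed field containing `k₀`, and equip
`k₀^{2r}` with the standard symplectic form given by `[[0, I_r], [−I_r, 0]]`.  For every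
maximal isotropic (Lagrangian) `k`-subspace `W ⊆ k^{2r}` there exists `γ ∈ H` such that
the projection of `γ·W` onto the first `r` coordinates is an isomorphism of `k`-vector
spaces. -/
theorem exists_weyl_elt_projection_bijective
    (k₀ k : Type*) [Field k₀] [Field k] [IsAlgClosed k] [Algebra k₀ k]
    (r : ℕ) (W : Submodule k ((Fin r ⊕ Fin r) → k))
    (hrank : Module.finrank k W = r)
    (hiso : ∀ x ∈ W, ∀ y ∈ W,
      ∑ i : Fin r, (x (Sum.inl i) * y (Sum.inr i) - x (Sum.inr i) * y (Sum.inl i)) = 0) :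
    ∃ γ ∈ weylSubgroup k₀ r, Function.Bijective
      ((LinearMap.funLeft k k Sum.inl).comp
        (Submodule.subtype (W.map
          (Matrix.mulVecLin
            (((γ : Matrix (Fin r ⊕ Fin r) (Fin r ⊕ Fin r) k₀)).map (algebraMap k₀ k)))))) := by
  classical
  let πl : ((Fin r ⊕ Fin r) → k) →ₗ[k] (Fin r → k) := LinearMap.funLeft k k Sum.inl
  let πr : ((Fin r ⊕ Fin r) → k) →ₗ[k] (Fin r → k) := LinearMap.funLeft k k Sum.inr
  let A : Submodule k (Fin r → k) := (W ⊓ LinearMap.ker πl).map πr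
  obtain ⟨S, hSinj, hSsurj⟩ := exists_coord_chart A
  -- (b) surjectivity lift: prescribe the `S`-coordinates of an element of `W ∩ ker πl`
  have hsurjW : ∀ c : S → k, ∃ u ∈ W, (∀ j, u (Sum.inl j) = 0) ∧
      ∀ i : S, u (Sum.inr i.1) = c i := by
    intro c
    obtain ⟨x, hx⟩ := hSsurj c
    obtain ⟨u, hu, hux⟩ := x.2
    refine ⟨u, hu.1, fun j => congrFun (LinearMap.mem_ker.mp hu.2) j, fun i => ?_⟩
    have h1 : (x : Fin r → k) i.1 = c i := congrFun hx i
    rw [← h1, ← hux]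
    rfl
  -- (a) injectivity: an element of `W ∩ ker πl` vanishing on the `S`-coordinates is zero
  have hinjW : ∀ u ∈ W, (∀ j, u (Sum.inl j) = 0) → (∀ i ∈ S, u (Sum.inr i) = 0) → u = 0 := by
    intro u hu h0 hS0
    have humem : πr u ∈ A :=
      Submodule.mem_map_of_mem ⟨hu, LinearMap.mem_ker.mpr (funext h0)⟩
    have hx : (⟨πr u, humem⟩ : A) = (0 : A) := by
      apply hSinj
      funext i
      show (πr u) i.1 = ((0 : A) : Fin r → k) i.1
      simp only [Submodule.coe_zero, Pi.zero_apply]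
      exact hS0 i.1 i.2
    have hπr : πr u = 0 := congrArg Subtype.val hx
    funext a
    cases a with
    | inl j => exact h0 j
    | inr j => exact congrFun hπr j
  set l := S.toList with hldef
  have hl : l.Nodup := S.nodup_toList
  have hmeml : ∀ i : Fin r, i ∈ l ↔ i ∈ S := fun i => Finset.mem_toList
  set γ : (Matrix (Fin r ⊕ Fin r) (Fin r ⊕ Fin r) k₀)ˣ := (l.map (epsUnit k₀ r)).prod with hγdef
  have hγmem : γ ∈ weylSubgroup k₀ r := by
    apply list_prod_mem
    intro x hx
    obtain ⟨i, -, rfl⟩ := List.mem_map.mp hx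
    exact Subgroup.subset_closure (Or.inl ⟨i, rfl⟩)
  set M : Matrix (Fin r ⊕ Fin r) (Fin r ⊕ Fin r) k :=
    ((γ : Matrix (Fin r ⊕ Fin r) (Fin r ⊕ Fin r) k₀)).map (algebraMap k₀ k) with hMdef
  have hγval : (γ : Matrix (Fin r ⊕ Fin r) (Fin r ⊕ Fin r) k₀) = (l.map (epsMat k₀ r)).prod := by
    rw [hγdef]
    rw [show ((l.map (epsUnit k₀ r)).prod : Matrix (Fin r ⊕ Fin r) (Fin r ⊕ Fin r) k₀)
      = (Units.coeHom _) (l.map (epsUnit k₀ r)).prod from rfl]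
    rw [map_list_prod, List.map_map]
    rfl
  have hM : M = (l.map (epsMat k r)).prod := by
    rw [hMdef, hγval]
    rw [show ((l.map (epsMat k₀ r)).prod).map (algebraMap k₀ k)
      = (RingHom.mapMatrix (algebraMap k₀ k)) (l.map (epsMat k₀ r)).prod from rfl]
    rw [map_list_prod, List.map_map]
    congr 1
    refine List.map_congr_left fun i _ => ?_
    show (epsMat k₀ r i).map (algebraMap k₀ k) = epsMat k r i
    exact epsMat_map _ r i
  have hflip : ∀ v, M.mulVecLin v = flipVec l v := fun v => by
    rw [Matrix.mulVecLin_apply, hM, prod_eps_mulVec l hl]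
  have hinj : Function.Injective
      ((LinearMap.funLeft k k Sum.inl).comp (Submodule.subtype (W.map M.mulVecLin))) := by
    rw [← LinearMap.ker_eq_bot, Submodule.eq_bot_iff]
    intro x hx
    rw [LinearMap.mem_ker] at hx
    have hx0 : ∀ j, (x : (Fin r ⊕ Fin r) → k) (Sum.inl j) = 0 := fun j => congrFun hx j
    obtain ⟨v, hv, hvx⟩ := x.2
    have hxv : ∀ a, flipVec l v a = (x : (Fin r ⊕ Fin r) → k) a := fun a => by
      rw [← hflip v, hvx]
    have h1 : ∀ j ∈ S, v (Sum.inr j) = 0 := by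
      intro j hj
      have := hxv (Sum.inl j)
      rw [hx0 j] at this
      simp only [flipVec, (hmeml j).mpr hj, if_true] at this
      exact neg_eq_zero.mp this
    have h2 : ∀ j ∉ S, v (Sum.inl j) = 0 := by
      intro j hj
      have hnl : j ∉ l := fun h => hj ((hmeml j).mp h)
      have := hxv (Sum.inl j)
      rw [hx0 j] at this
      simpa only [flipVec, hnl, if_false] using this
    have h3 : ∀ j, v (Sum.inl j) = 0 := by
      intro j
      by_cases hj : j ∈ S
      · obtain ⟨u, huW, hu0, huS⟩ := hsurjW (fun i => if i.1 = j then 1 else 0)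
        have hsum := hiso v hv u huW
        rw [Finset.sum_eq_single j ?h0 (fun h => absurd (Finset.mem_univ j) h)] at hsum
        · have huj : u (Sum.inr j) = 1 := by
            have := huS ⟨j, hj⟩
            simpa using this
          rw [huj, hu0 j, mul_one, mul_zero, sub_zero] at hsum
          exact hsum
        · intro i _ hij
          rw [hu0 i, mul_zero, sub_zero]
          by_cases hiS : i ∈ S
          · have : u (Sum.inr i) = 0 := by
              have := huS ⟨i, hiS⟩
              simpa [hij] using this
            rw [this, mul_zero]
          · rw [h2 i hiS, zero_mul]
      · exact h2 j hj
    have hv0 : v = 0 := hinjW v hv h3 h1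
    have : (x : (Fin r ⊕ Fin r) → k) = 0 := by rw [← hvx, hv0, map_zero]
    exact Subtype.ext this
  -- surjectivity via dimension count
  set N : Matrix (Fin r ⊕ Fin r) (Fin r ⊕ Fin r) k :=
    ((γ⁻¹ : (Matrix (Fin r ⊕ Fin r) (Fin r ⊕ Fin r) k₀)ˣ) :
      Matrix (Fin r ⊕ Fin r) (Fin r ⊕ Fin r) k₀).map (algebraMap k₀ k) with hNdef
  have hMN : M * N = 1 := by
    rw [hMdef, hNdef, ← Matrix.map_mul, Units.mul_inv,
      Matrix.map_one _ (map_zero _) (map_one _)]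
  have hNM : N * M = 1 := mul_eq_one_comm.mp hMN
  let e : ((Fin r ⊕ Fin r) → k) ≃ₗ[k] ((Fin r ⊕ Fin r) → k) :=
    LinearEquiv.ofLinear M.mulVecLin N.mulVecLin
      (by rw [← Matrix.mulVecLin_mul, hMN, Matrix.mulVecLin_one])
      (by rw [← Matrix.mulVecLin_mul, hNM, Matrix.mulVecLin_one])
  have hfr : Module.finrank k (W.map M.mulVecLin) = Module.finrank k W :=
    LinearEquiv.finrank_map_eq e W
  have heq : Module.finrank k (W.map M.mulVecLin) = Module.finrank k (Fin r → k) := by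
    rw [hfr, hrank, Module.finrank_pi, Fintype.card_fin]
  have hsurj : Function.Surjective
      ((LinearMap.funLeft k k Sum.inl).comp (Submodule.subtype (W.map M.mulVecLin))) :=
    (LinearMap.injective_iff_surjective_of_finrank_eq_finrank heq).mp hinj
  exact ⟨γ, hγmem, hinj, hsurj⟩
end

section
/- Let k0 be a field, k an algebraically closed field containing k0, and r ≥ 1. Let T = (t_{ij}) ∈ Mat_r(k) be a symmetric matrix, and suppose that the evaluation map ev_T : f ↦ f(T), from the k0-subspace of polynomials of total degree ≤ 2 in the polynomial ring k0[X_{ij} : 1 ≤ i ≤ j ≤ r] to k, is injective. Let W_T ⊆ k^{2r} be the k-span of the r columns of the 2r×r block matrix with upper block the identity I_r and lower block T (a Lagrangian subspace for the standard symplectic form given by [[0, I_r],[−I_r, 0]]). Then {A ∈ Mat_{2r}(k0) : A·W_T ⊆ W_T} = k0·I_{2r}. -/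
/-- The `k`-span `W_T` of the `r` columns of the `2r × r` block matrix with upper block the
identity `I_r` and lower block `T`, inside `k^{2r} = k^r ⊕ k^r`. -/
def lagSpanT (k : Type*) [Field k] (r : ℕ) (T : Matrix (Fin r) (Fin r) k) :
    Submodule k ((Fin r ⊕ Fin r) → k) :=
  Submodule.span k (Set.range fun j : Fin r =>
    (Sum.elim (fun i => if i = j then (1 : k) else 0) (fun i => T i j) :
      (Fin r ⊕ Fin r) → k))

namespace SymplStabAux

def sp {r : ℕ} (a b : Fin r) : {q : Fin r × Fin r // q.1 ≤ q.2} :=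
  ⟨(a ⊓ b, a ⊔ b), inf_le_sup⟩

lemma sp_comm {r : ℕ} (a b : Fin r) : sp a b = sp b a := by
  simp [sp, inf_comm, sup_comm]

lemma sp_eq_iff {r : ℕ} {a b c d : Fin r} :
    sp a b = sp c d ↔ (a = c ∧ b = d) ∨ (a = d ∧ b = c) := by
  constructor
  · intro h
    obtain ⟨h1, h2⟩ : a ⊓ b = c ⊓ d ∧ a ⊔ b = c ⊔ d := by
      simpa [sp, Subtype.ext_iff, Prod.ext_iff] using h
    rcases le_total a b with hab | hab <;> rcases le_total c d with hcd | hcd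
    · rw [inf_eq_left.mpr hab, inf_eq_left.mpr hcd] at h1
      rw [sup_eq_right.mpr hab, sup_eq_right.mpr hcd] at h2
      tauto
    · rw [inf_eq_left.mpr hab, inf_eq_right.mpr hcd] at h1
      rw [sup_eq_right.mpr hab, sup_eq_left.mpr hcd] at h2
      tauto
    · rw [inf_eq_right.mpr hab, inf_eq_left.mpr hcd] at h1
      rw [sup_eq_left.mpr hab, sup_eq_right.mpr hcd] at h2
      tauto
    · rw [inf_eq_right.mpr hab, inf_eq_right.mpr hcd] at h1
      rw [sup_eq_left.mpr hab, sup_eq_left.mpr hcd] at h2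
      tauto
  · rintro (⟨rfl, rfl⟩ | ⟨rfl, rfl⟩)
    · rfl
    · exact sp_comm a b

lemma sp_eq_diag_iff {r : ℕ} {a b c : Fin r} :
    sp a b = sp c c ↔ a = c ∧ b = c := by
  rw [sp_eq_iff]; tauto

def lagKer (k : Type*) [Field k] (r : ℕ) (T : Matrix (Fin r) (Fin r) k) :
    Submodule k ((Fin r ⊕ Fin r) → k) where
  carrier := {y | ∀ i, y (Sum.inr i) = ∑ l, T i l * y (Sum.inl l)}
  add_mem' := by
    intro a b ha hb i
    simp only [Pi.add_apply, ha i, hb i, mul_add, Finset.sum_add_distrib]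
  zero_mem' := by intro i; simp
  smul_mem' := by
    intro c y hy i
    simp only [Pi.smul_apply, smul_eq_mul, hy i, Finset.mul_sum]
    exact Finset.sum_congr rfl fun l _ => by ring

lemma mem_lagSpanT_iff (k : Type*) [Field k] (r : ℕ) (T : Matrix (Fin r) (Fin r) k)
    (x : (Fin r ⊕ Fin r) → k) :
    x ∈ lagSpanT k r T ↔ ∀ i, x (Sum.inr i) = ∑ l, T i l * x (Sum.inl l) := by
  constructor
  · intro hx
    refine Submodule.span_le (p := lagKer k r T) |>.2 ?_ hx
    rintro _ ⟨j, rfl⟩ i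
    simp [lagKer, mul_ite, Finset.sum_ite_eq]
  · intro hx
    have : x = ∑ j, x (Sum.inl j) •
        (Sum.elim (fun i => if i = j then (1 : k) else 0) (fun i => T i j) :
          (Fin r ⊕ Fin r) → k) := by
      funext y
      rcases y with i | i
      · simp [Finset.sum_apply]
      · simp only [Finset.sum_apply, Pi.smul_apply, Sum.elim_inr, smul_eq_mul, hx i]
        exact Finset.sum_congr rfl fun l _ => by ring
    rw [this]
    exact Submodule.sum_mem _ fun j _ => Submodule.smul_mem _ _
      (Submodule.subset_span ⟨j, rfl⟩)

end SymplStabAux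


open SymplStabAux MvPolynomial in
/-- Let `k₀` be a field, `k` an algebraically closed field containing `k₀`, and `r ≥ 1`.
Let `T ∈ Mat_r(k)` be symmetric, and suppose that evaluation at `T` is injective on the
`k₀`-subspace of polynomials of total degree `≤ 2` in `k₀[X_{ij} : 1 ≤ i ≤ j ≤ r]`.  Let
`W_T ⊆ k^{2r}` be the `k`-span of the columns of the block matrix `[I_r; T]` (a Lagrangian
subspace for the standard symplectic form `[[0, I_r], [−I_r, 0]]`).  Then the only matrices
with entries in `k₀` preserving `W_T` are the scalar matrices. -/
theorem symplectic_stabilizer_eq_scalars_of_degree_two_injective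
    (k₀ k : Type*) [Field k₀] [Field k] [IsAlgClosed k] [Algebra k₀ k]
    (r : ℕ) (hr : 1 ≤ r)
    (T : Matrix (Fin r) (Fin r) k) (hsymm : T.IsSymm)
    (hinj : Set.InjOn
      (MvPolynomial.aeval fun p : {q : Fin r × Fin r // q.1 ≤ q.2} => T p.1.1 p.1.2)
      {f : MvPolynomial {q : Fin r × Fin r // q.1 ≤ q.2} k₀ | f.totalDegree ≤ 2}) :
    {A : Matrix (Fin r ⊕ Fin r) (Fin r ⊕ Fin r) k₀ |
        ∀ x ∈ lagSpanT k r T, (A.map (algebraMap k₀ k)).mulVec x ∈ lagSpanT k r T} =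
      {A : Matrix (Fin r ⊕ Fin r) (Fin r ⊕ Fin r) k₀ |
        ∃ a : k₀, A = a • (1 : Matrix (Fin r ⊕ Fin r) (Fin r ⊕ Fin r) k₀)} := by
  set φ := algebraMap k₀ k with hφ
  have hT : ∀ a b : Fin r, T (sp a b).1.1 (sp a b).1.2 = T a b := by
    intro a b
    rcases le_total a b with h | h
    · simp [sp, inf_eq_left.mpr h, sup_eq_right.mpr h]
    · rw [show (sp a b) = ⟨(b, a), h⟩ by
        simp [sp, inf_eq_right.mpr h, sup_eq_left.mpr h]]
      exact hsymm.apply a b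
  ext A
  simp only [Set.mem_setOf_eq]
  constructor
  · intro hA
    set P : Matrix (Fin r) (Fin r) k₀ := fun i l => A (Sum.inl i) (Sum.inl l) with hP
    set Q : Matrix (Fin r) (Fin r) k₀ := fun i l => A (Sum.inl i) (Sum.inr l) with hQ
    set R : Matrix (Fin r) (Fin r) k₀ := fun i l => A (Sum.inr i) (Sum.inl l) with hR
    set S : Matrix (Fin r) (Fin r) k₀ := fun i l => A (Sum.inr i) (Sum.inr l) with hS
    -- the basic relation
    have hrel : ∀ i j : Fin r,
        φ (R i j) + ∑ l, φ (S i l) * T l j =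
          ∑ m, T i m * (φ (P m j) + ∑ l, φ (Q m l) * T l j) := by
      intro i j
      have hgen : (Sum.elim (fun i => if i = j then (1 : k) else 0) (fun i => T i j) :
          (Fin r ⊕ Fin r) → k) ∈ lagSpanT k r T :=
        Submodule.subset_span ⟨j, rfl⟩
      have h2 := (mem_lagSpanT_iff k r T _).1 (hA _ hgen) i
      have hl : ∀ m, ((A.map φ).mulVec (Sum.elim
          (fun i => if i = j then (1 : k) else 0) (fun i => T i j))) (Sum.inl m)
          = φ (P m j) + ∑ l, φ (Q m l) * T l j := by
        intro m
        simp [Matrix.mulVec, Matrix.map, dotProduct, Fintype.sum_sum_type,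
          mul_ite, mul_one, mul_zero, Finset.sum_ite_eq, P, Q]
      have hr' : ((A.map φ).mulVec (Sum.elim
          (fun i => if i = j then (1 : k) else 0) (fun i => T i j))) (Sum.inr i)
          = φ (R i j) + ∑ l, φ (S i l) * T l j := by
        simp [Matrix.mulVec, Matrix.map, dotProduct, Fintype.sum_sum_type,
          mul_ite, mul_one, mul_zero, Finset.sum_ite_eq, R, S]
      rw [hr'] at h2
      rw [h2]
      exact Finset.sum_congr rfl fun m _ => by rw [hl m]
    -- the polynomial
    set F : ∀ (_ _ : Fin r), MvPolynomial {q : Fin r × Fin r // q.1 ≤ q.2} k₀ :=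
      fun i j =>
        monomial 0 (R i j) + (∑ l, monomial (Finsupp.single (sp l j) 1) (S i l))
          - (∑ m, monomial (Finsupp.single (sp i m) 1) (P m j))
          - (∑ m, ∑ l, monomial
              (Finsupp.single (sp i m) 1 + Finsupp.single (sp l j) 1) (Q m l)) with hF
    have hone : ∀ p : {q : Fin r × Fin r // q.1 ≤ q.2},
        (Finsupp.single p 1).sum (fun _ e => e) = 1 :=
      fun p => Finsupp.sum_single_index rfl
    have htwo : ∀ p q : {q : Fin r × Fin r // q.1 ≤ q.2},
        (Finsupp.single p 1 + Finsupp.single q 1).sum (fun _ e => e) = 2 := by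
      intro p q
      rw [Finsupp.sum_add_index' (fun _ => rfl) (fun _ _ _ => rfl), hone, hone]
    have hm : ∀ (d : {q : Fin r × Fin r // q.1 ≤ q.2} →₀ ℕ) (c : k₀),
        (monomial d c).totalDegree ≤ d.sum fun _ e => e := by
      intro d c
      by_cases hc : c = 0
      · simp [hc]
      · rw [totalDegree_monomial _ hc]
    have hdeg : ∀ i j, (F i j).totalDegree ≤ 2 := by
      intro i j
      refine le_trans (totalDegree_sub _ _) (max_le (le_trans (totalDegree_sub _ _)
        (max_le (le_trans (totalDegree_add _ _) (max_le ?_ ?_)) ?_)) ?_)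
      · exact le_trans (hm _ _) (by simp)
      · exact le_trans (totalDegree_finset_sum _ _) (Finset.sup_le fun l _ =>
          le_trans (hm _ _) (by rw [hone]; omega))
      · exact le_trans (totalDegree_finset_sum _ _) (Finset.sup_le fun m _ =>
          le_trans (hm _ _) (by rw [hone]; omega))
      · exact le_trans (totalDegree_finset_sum _ _) (Finset.sup_le fun m _ =>
          le_trans (totalDegree_finset_sum _ _) (Finset.sup_le fun l _ =>
            le_trans (hm _ _) (by rw [htwo])))
    have haev : ∀ i j, aeval (fun p : {q : Fin r × Fin r // q.1 ≤ q.2} => T p.1.1 p.1.2)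
        (F i j) = 0 := by
      intro i j
      have e1 : ∀ (p : {q : Fin r × Fin r // q.1 ≤ q.2}) (c : k₀),
          aeval (fun p : {q : Fin r × Fin r // q.1 ≤ q.2} => T p.1.1 p.1.2)
            (monomial (Finsupp.single p 1) c) = φ c * T p.1.1 p.1.2 := by
        intro p c; rw [aeval_monomial, Finsupp.prod_single_index] <;> simp [hφ]
      have e2 : ∀ (p q : {q : Fin r × Fin r // q.1 ≤ q.2}) (c : k₀),
          aeval (fun p : {q : Fin r × Fin r // q.1 ≤ q.2} => T p.1.1 p.1.2)
            (monomial (Finsupp.single p 1 + Finsupp.single q 1) c)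
            = φ c * (T p.1.1 p.1.2 * T q.1.1 q.1.2) := by
        intro p q c
        rw [aeval_monomial, Finsupp.prod_add_index (by simp) (by intros; rw [pow_add]),
          Finsupp.prod_single_index (by simp), Finsupp.prod_single_index (by simp)]
        simp [mul_assoc, hφ]
      simp only [hF, map_sub, map_add, map_sum, e1, e2, aeval_monomial,
        Finsupp.prod_zero_index, mul_one, hT, ← hφ]
      rw [sub_sub, sub_eq_zero, hrel i j, ← Finset.sum_add_distrib]
      refine Finset.sum_congr rfl fun m _ => ?_
      rw [mul_add, Finset.mul_sum]
      exact congrArg₂ (· + ·) (mul_comm _ _) (Finset.sum_congr rfl fun l _ => by ring)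
    have hF0 : ∀ i j, F i j = 0 := by
      intro i j
      refine hinj (hdeg i j) (by simp : (0 : MvPolynomial _ k₀) ∈ _) ?_
      rw [haev i j, map_zero]
    -- coefficient extraction
    have hco : ∀ (i j : Fin r) (d : {q : Fin r × Fin r // q.1 ≤ q.2} →₀ ℕ),
        ((if (0 : {q : Fin r × Fin r // q.1 ≤ q.2} →₀ ℕ) = d then R i j else 0)
          + ∑ l, (if Finsupp.single (sp l j) 1 = d then S i l else 0))
          - (∑ m, (if Finsupp.single (sp i m) 1 = d then P m j else 0))
          - (∑ m, ∑ l, (if Finsupp.single (sp i m) 1 + Finsupp.single (sp l j) 1 = d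
              then Q m l else 0)) = 0 := by
      intro i j d
      have h := congrArg (coeff d) (hF0 i j)
      simpa only [hF, coeff_sub, coeff_add, coeff_sum, coeff_monomial, coeff_zero] using h
    have hne10 : ∀ p : {q : Fin r × Fin r // q.1 ≤ q.2},
        Finsupp.single p 1 ≠ (0 : {q : Fin r × Fin r // q.1 ≤ q.2} →₀ ℕ) :=
      fun p h => one_ne_zero (α := ℕ) (by simpa [Finsupp.single_eq_zero] using h)
    have hne20 : ∀ p q : {q : Fin r × Fin r // q.1 ≤ q.2},
        Finsupp.single p 1 + Finsupp.single q 1 ≠ 0 := by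
      intro p q h
      exact hne10 p ((Finsupp.add_eq_zero_iff _ _).1 h).1
    have hne21 : ∀ p q s : {q : Fin r × Fin r // q.1 ≤ q.2},
        Finsupp.single p 1 + Finsupp.single q 1 ≠ Finsupp.single s 1 := by
      intro p q s h
      have h2 : ((Finsupp.single p 1 + Finsupp.single q 1).sum fun _ e => e)
          = ((Finsupp.single s (1 : ℕ)).sum fun _ e => e) :=
        congrArg (fun d : {q : Fin r × Fin r // q.1 ≤ q.2} →₀ ℕ => d.sum fun _ e => e) h
      rw [htwo, hone] at h2
      omega
    have hsin : ∀ p q : {q : Fin r × Fin r // q.1 ≤ q.2},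
        (Finsupp.single p 1 = Finsupp.single q (1 : ℕ)) ↔ p = q := by
      intro p q; simp [Finsupp.single_eq_single_iff]
    have hquad : ∀ p q p' q' : {q : Fin r × Fin r // q.1 ≤ q.2},
        (Finsupp.single p 1 + Finsupp.single q 1
          = Finsupp.single p' 1 + Finsupp.single q' (1 : ℕ))
          ↔ (p = p' ∧ q = q') ∨ (p = q' ∧ q = p') := by
      intro p q p' q'
      rw [Finsupp.single_add_single_eq_single_add_single one_ne_zero one_ne_zero]
      simp
    -- R = 0
    have hR0 : ∀ i j, R i j = 0 := by
      intro i j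
      have h := hco i j 0
      simpa [hne10, hne20] using h
    -- Q = 0
    have hQ0 : ∀ m0 l0, Q m0 l0 = 0 := by
      intro m0 l0
      have h := hco m0 l0 (Finsupp.single (sp m0 m0) 1 + Finsupp.single (sp l0 l0) 1)
      have hcnd : ∀ m l : Fin r,
          (Finsupp.single (sp m0 m) 1 + Finsupp.single (sp l l0) 1
            = Finsupp.single (sp m0 m0) 1 + Finsupp.single (sp l0 l0) 1)
            ↔ (m = m0 ∧ l = l0) := by
        intro m l
        rw [hquad, sp_eq_diag_iff, sp_eq_diag_iff, sp_eq_diag_iff, sp_eq_diag_iff]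
        omega
      simp only [hcnd] at h
      rw [if_neg (Ne.symm (hne20 (sp m0 m0) (sp l0 l0)))] at h
      rw [Finset.sum_eq_zero (fun l _ => if_neg (Ne.symm (hne21 _ _ _))),
        Finset.sum_eq_zero (fun m _ => if_neg (Ne.symm (hne21 _ _ _)))] at h
      have h2 : (∑ m, ∑ l, if m = m0 ∧ l = l0 then Q m l else 0) = Q m0 l0 := by
        simp [Finset.sum_ite_eq, ite_and]
      rw [h2] at h
      simpa using h
    -- linear relation
    have hlin : ∀ (i j : Fin r) (p : {q : Fin r × Fin r // q.1 ≤ q.2}),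
        (∑ l, if sp l j = p then S i l else 0) = ∑ m, if sp i m = p then P m j else 0 := by
      intro i j p
      have h := hco i j (Finsupp.single p 1)
      rw [if_neg (Ne.symm (hne10 p)),
        Finset.sum_eq_zero (s := Finset.univ)
          (fun m _ => Finset.sum_eq_zero fun l _ => if_neg (hne21 _ _ _))] at h
      simp only [hsin, zero_add, sub_zero, sub_eq_zero] at h
      exact h
    have hSP : ∀ i l0 : Fin r, S i l0 = P l0 i := by
      intro i l0
      have h := hlin i i (sp i l0)
      have c1 : ∀ l : Fin r, sp l i = sp i l0 ↔ l = l0 := by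
        intro l; rw [sp_eq_iff]; omega
      have c2 : ∀ m : Fin r, sp i m = sp i l0 ↔ m = l0 := by
        intro m; rw [sp_eq_iff]; omega
      simpa only [c1, c2, Finset.sum_ite_eq', Finset.mem_univ, if_true] using h
    have hS0 : ∀ i l0 : Fin r, i ≠ l0 → S i l0 = 0 := by
      intro i l0 hne
      have h := hlin i l0 (sp l0 l0)
      have c1 : ∀ l : Fin r, sp l l0 = sp l0 l0 ↔ l = l0 := by
        intro l; rw [sp_eq_diag_iff]; omega
      have c2 : ∀ m : Fin r, sp i m = sp l0 l0 ↔ False := by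
        intro m; rw [sp_eq_diag_iff]
        simp only [iff_false]
        rintro ⟨rfl, -⟩
        exact hne rfl
      simpa only [c1, c2, if_false, Finset.sum_const_zero,
        Finset.sum_ite_eq', Finset.mem_univ, if_true] using h
    have hdiagEq : ∀ i j : Fin r, i ≠ j → S i i = P j j := by
      intro i j hne
      have h := hlin i j (sp i j)
      have c1 : ∀ l : Fin r, sp l j = sp i j ↔ l = i := by
        intro l; rw [sp_eq_iff]; omega
      have c2 : ∀ m : Fin r, sp i m = sp i j ↔ m = j := by
        intro m; rw [sp_eq_iff]; omega
      simpa only [c1, c2, Finset.sum_ite_eq', Finset.mem_univ, if_true] using h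
    -- assembly
    set i0 : Fin r := ⟨0, hr⟩ with hi0
    refine ⟨P i0 i0, ?_⟩
    have hPd : ∀ i, P i i = P i0 i0 := by
      intro i
      by_cases h : i = i0
      · rw [h]
      · rw [← hSP i i]
        exact hdiagEq i i0 h
    ext x y
    rcases x with i | i <;> rcases y with l | l
    · show P i l = _
      by_cases h : i = l
      · subst h
        simp [Matrix.one_apply, hPd i]
      · have : P i l = 0 := by rw [← hSP l i]; exact hS0 l i (fun hh => h hh.symm)
        simp [Matrix.one_apply, this, h]
    · show Q i l = _
      simp [Matrix.one_apply, hQ0 i l]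
    · show R i l = _
      simp [Matrix.one_apply, hR0 i l]
    · show S i l = _
      by_cases h : i = l
      · subst h
        rw [hSP i i, hPd i]
        simp [Matrix.one_apply]
      · simp [Matrix.one_apply, hS0 i l h, h]
  · rintro ⟨a, rfl⟩ x hx
    have : ((a • (1 : Matrix (Fin r ⊕ Fin r) (Fin r ⊕ Fin r) k₀)).map φ).mulVec x
        = φ a • x := by
      funext i
      simp [Matrix.mulVec, Matrix.map, dotProduct, Matrix.one_apply, apply_ite φ,
        ite_mul, zero_mul, Finset.sum_ite_eq, mul_comm]
    rw [this]
    exact Submodule.smul_mem _ _ hx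
end

section
/- Let k0 be a field and k an algebraically closed field such that the extension k/k0 is infinite, and let r ≥ 1. Equip k_0^{2r} with the standard symplectic form ψ0 given by the matrix [[0, I_r],[−I_r, 0]]. Then there exists a maximal isotropic (Lagrangian) k-subspace W ⊆ k^{2r}, i.e., dim_k W = r and the k-bilinear extension of ψ0 vanishes identically on W × W, such that {A ∈ Mat_{2r}(k0) : A·W ⊆ W} = k0·I_{2r}. -/
section Aux

private lemma pow4_add_ne : ∀ n a b c : ℕ, a + b + c ≤ n → 4 ^ a + 4 ^ b ≠ 4 ^ c := by
  intro n
  induction n with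
  | zero =>
    intro a b c h
    have ha : a = 0 := by omega
    have hb : b = 0 := by omega
    have hc : c = 0 := by omega
    subst ha; subst hb; subst hc; simp
  | succ n ih =>
    intro a b c hn h
    have p1 : (1:ℕ) ≤ 4 ^ a := Nat.one_le_pow _ _ (by norm_num)
    have p2 : (1:ℕ) ≤ 4 ^ b := Nat.one_le_pow _ _ (by norm_num)
    rcases c with _|c
    · simp only [pow_zero] at h; omega
    · rcases a with _|a
      · rcases b with _|b
        · rw [pow_succ] at h; simp at h; omega
        · rw [pow_succ, pow_succ] at h; simp at h; omega
      · rcases b with _|b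
        · rw [pow_succ, pow_succ] at h; omega
        · rw [pow_succ, pow_succ, pow_succ] at h
          exact ih a b c (by omega) (by omega)

private lemma pow4_add_ne' (a b c : ℕ) : 4 ^ a + 4 ^ b ≠ 4 ^ c :=
  pow4_add_ne (a+b+c) a b c le_rfl

private lemma pow4_inj {a b : ℕ} (h : (4:ℕ) ^ a = 4 ^ b) : a = b :=
  Nat.pow_right_injective (by norm_num) h

private lemma pow4_add_inj : ∀ n a b c d : ℕ, a + b + c + d ≤ n →
    4 ^ a + 4 ^ b = 4 ^ c + 4 ^ d → (a = c ∧ b = d) ∨ (a = d ∧ b = c) := by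
  intro n
  induction n with
  | zero => intro a b c d h _; left; omega
  | succ n ih =>
    intro a b c d hn h
    have p1 : (1:ℕ) ≤ 4 ^ a := Nat.one_le_pow _ _ (by norm_num)
    have p2 : (1:ℕ) ≤ 4 ^ b := Nat.one_le_pow _ _ (by norm_num)
    have p3 : (1:ℕ) ≤ 4 ^ c := Nat.one_le_pow _ _ (by norm_num)
    have p4 : (1:ℕ) ≤ 4 ^ d := Nat.one_le_pow _ _ (by norm_num)
    rcases a with _|a
    · rcases c with _|c
      · left; exact ⟨rfl, pow4_inj (by simpa using (by omega : (4:ℕ)^b = 4^d))⟩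
      · rcases d with _|d
        · right; exact ⟨rfl, pow4_inj (by simpa using (by omega : (4:ℕ)^b = 4^(c+1)))⟩
        · exfalso
          rcases b with _|b
          · rw [pow_succ, pow_succ] at h; simp at h; omega
          · rw [pow_succ, pow_succ, pow_succ] at h; simp at h; omega
    · rcases b with _|b
      · rcases c with _|c
        · right; exact ⟨pow4_inj (by omega), rfl⟩
        · rcases d with _|d
          · left; exact ⟨pow4_inj (by omega), rfl⟩
          · exfalso
            rw [pow_succ, pow_succ, pow_succ] at h; simp at h; omega
      · rcases c with _|c
        · exfalso
          rcases d with _|d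
          · rw [pow_succ, pow_succ] at h; omega
          · rw [pow_succ, pow_succ, pow_succ] at h; omega
        · rcases d with _|d
          · exfalso
            rw [pow_succ, pow_succ, pow_succ] at h; omega
          · rw [pow_succ, pow_succ, pow_succ, pow_succ] at h
            have := ih a b c d (by omega) (by omega)
            omega

private lemma pow4_add_inj' {a b c d : ℕ} (h : (4:ℕ) ^ a + 4 ^ b = 4 ^ c + 4 ^ d) :
    (a = c ∧ b = d) ∨ (a = d ∧ b = c) :=
  pow4_add_inj (a+b+c+d) a b c d le_rfl h

private lemma pair_min_max {r : ℕ} {a b a' b' : ℕ} (ha : a < r) (hb : b < r)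
    (ha' : a' < r) (hb' : b' < r)
    (h : min a b * r + max a b = min a' b' * r + max a' b') :
    min a b = min a' b' ∧ max a b = max a' b' := by
  have hr : 0 < r := by omega
  have h1 : max a b < r := by omega
  have h2 : max a' b' < r := by omega
  have e1 : (min a b * r + max a b) % r = max a b := by
    rw [add_comm, Nat.add_mul_mod_self_right, Nat.mod_eq_of_lt h1]
  have e2 : (min a' b' * r + max a' b') % r = max a' b' := by
    rw [add_comm, Nat.add_mul_mod_self_right, Nat.mod_eq_of_lt h2]
  have hmax : max a b = max a' b' := by
    rw [← e1, ← e2]; exact congrArg (· % r) h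
  refine ⟨?_, hmax⟩
  have h3 := h
  rw [hmax] at h3
  have h4 : min a b * r = min a' b' * r := Nat.add_right_cancel h3
  exact Nat.eq_of_mul_eq_mul_right hr h4

open Polynomial in
private theorem exists_big_element (k₀ k : Type*) [Field k₀] [Field k] [IsAlgClosed k]
    [Algebra k₀ k] (hinf : ¬ FiniteDimensional k₀ k) (D : ℕ) :
    ∃ t : k, ∀ p : k₀[X], p.natDegree ≤ D → (Polynomial.aeval t) p = 0 → p = 0 := by
  by_contra hcon
  push_neg at hcon
  have hdeg : ∀ t : k, IsIntegral k₀ t ∧ (minpoly k₀ t).natDegree ≤ D := by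
    intro t
    obtain ⟨p, hpd, hp0, hpne⟩ := hcon t
    have halg : IsAlgebraic k₀ t := ⟨p, hpne, hp0⟩
    have hint : IsIntegral k₀ t := halg.isIntegral
    refine ⟨hint, ?_⟩
    have h1 := minpoly.degree_le_of_ne_zero k₀ t hpne hp0
    have h2 := Polynomial.natDegree_le_natDegree h1
    omega
  have halg : Algebra.IsAlgebraic k₀ k := ⟨fun t => ((hdeg t).1).isAlgebraic⟩
  set L := separableClosure k₀ k with hLdef
  have hdegL : ∀ x : k, (minpoly L x).natDegree ≤ D := by
    intro x
    have hx0 : IsIntegral k₀ x := (hdeg x).1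
    have hmap : (Polynomial.aeval x) ((minpoly k₀ x).map (algebraMap k₀ L)) = 0 := by
      rw [Polynomial.aeval_map_algebraMap]; exact minpoly.aeval k₀ x
    have hne : (minpoly k₀ x).map (algebraMap k₀ L) ≠ 0 :=
      (Polynomial.map_ne_zero_iff (algebraMap k₀ L).injective).mpr (minpoly.ne_zero hx0)
    have h1 := minpoly.degree_le_of_ne_zero L x hne hmap
    have h2 := Polynomial.natDegree_le_natDegree h1
    rw [Polynomial.natDegree_map] at h2
    exact le_trans h2 (hdeg x).2
  have hLfin : FiniteDimensional k₀ L := by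
    by_contra hLinf
    have hal : Cardinal.aleph0 ≤ Module.rank k₀ L := by
      by_contra hlt
      push_neg at hlt
      exact hLinf (Module.rank_lt_aleph0_iff.mp hlt)
    have hrank : ((D+1 : ℕ) : Cardinal) ≤ Module.rank k₀ L :=
      le_trans (le_of_lt (Cardinal.nat_lt_aleph0 _)) hal
    obtain ⟨s, hcard, hli⟩ := le_rank_iff_exists_linearIndependent_finset.mp hrank
    let inc : L →ₗ[k₀] k := (IsScalarTower.toAlgHom k₀ L k).toLinearMap
    have hinc : Function.Injective inc := (algebraMap L k).injective
    have hliK : LinearIndependent k₀ (fun x : (s : Set L) => ((x : L) : k)) :=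
      hli.map' inc (LinearMap.ker_eq_bot.mpr hinc)
    set S : Set k := (fun x : L => (x : k)) '' (s : Set L) with hSdef
    haveI hSfin : Finite S := (s.finite_toSet.image _).to_subtype
    have hSint : ∀ x ∈ S, IsIntegral k₀ x := fun x _ => (hdeg x).1
    haveI hF₀fin : FiniteDimensional k₀ (IntermediateField.adjoin k₀ S) :=
      IntermediateField.finiteDimensional_adjoin hSint
    set F₀ := IntermediateField.adjoin k₀ S with hF₀def
    haveI hF₀sep : Algebra.IsSeparable k₀ F₀ := by
      refine (IntermediateField.isSeparable_adjoin_iff_isSeparable k₀ k).mpr ?_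
      rintro x ⟨y, hy, rfl⟩
      exact mem_separableClosure_iff.mp y.2
    let v : ↥(s : Set L) → F₀ := fun x =>
      ⟨((x : L) : k), IntermediateField.subset_adjoin k₀ S ⟨(x : L), x.2, rfl⟩⟩
    have hv : LinearIndependent k₀ v := by
      apply LinearIndependent.of_comp (F₀.val.toLinearMap)
      have hh : ⇑F₀.val.toLinearMap ∘ v = fun x : ↥(s : Set L) => ((x : L) : k) := rfl
      rw [hh]
      exact hliK
    have hD1 : D + 1 ≤ Module.finrank k₀ F₀ := by
      have hcard2 : Fintype.card ↥(s : Set L) = D + 1 := by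
        rw [← hcard]
        simp
      calc D + 1 = Fintype.card ↥(s : Set L) := hcard2.symm
        _ ≤ Module.finrank k₀ F₀ := hv.fintype_card_le_finrank
    obtain ⟨α, hα⟩ := Field.exists_primitive_element k₀ F₀
    have hαint : IsIntegral k₀ α := Algebra.IsIntegral.isIntegral α
    have h3 := IntermediateField.adjoin.finrank hαint
    rw [hα, IntermediateField.finrank_top'] at h3
    have h4 : minpoly k₀ (algebraMap F₀ k α) = minpoly k₀ α :=
      minpoly.algebraMap_eq (algebraMap F₀ k).injective α
    have h5 := (hdeg (algebraMap F₀ k α)).2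
    rw [h4, ← h3] at h5
    omega
  haveI hPI : IsPurelyInseparable L k := separableClosure.isPurelyInseparable k₀ k
  -- show every element of k lies in L
  obtain ⟨q, hq⟩ := ExpChar.exists (R := L)
  have hmem : ∀ y : k, y ∈ L := by
    intro y
    cases hq with
    | zero =>
      haveI : ExpChar L 1 := ExpChar.zero
      obtain ⟨n, c, hmin⟩ := IsPurelyInseparable.minpoly_eq_X_pow_sub_C L 1 y
      have := minpoly.aeval L y
      rw [hmin] at this
      simp only [one_pow, pow_one, map_sub, Polynomial.aeval_X, Polynomial.aeval_C] at this
      have hac : (algebraMap L k) c = (c : k) := rfl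
      rw [hac, sub_eq_zero] at this
      rw [this]
      exact c.2
    | prime hq =>
      haveI : ExpChar L q := ExpChar.prime hq
      have hq2 : 2 ≤ q := hq.two_le
      set e := D + 1 with he
      have hpos : 0 < q ^ e := Nat.pow_pos (by omega)
      obtain ⟨x, hx⟩ := IsAlgClosed.exists_pow_nat_eq y hpos
      obtain ⟨n, c, hmin⟩ := IsPurelyInseparable.minpoly_eq_X_pow_sub_C L q x
      have hnd : (minpoly L x).natDegree = q ^ n := by
        rw [hmin]; exact Polynomial.natDegree_X_pow_sub_C
      have hqn : q ^ n ≤ D := by rw [← hnd]; exact hdegL x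
      have hlt : q ^ n < q ^ e := by
        have h2e : D < 2 ^ e := by
          have h1 : D < 2 ^ D := Nat.lt_two_pow_self
          have h2 : (2:ℕ) ^ D ≤ 2 ^ e := Nat.pow_le_pow_right (by norm_num) (by omega)
          omega
        calc q ^ n ≤ D := hqn
          _ < 2 ^ e := h2e
          _ ≤ q ^ e := Nat.pow_le_pow_left hq2 e
      have hne : n ≤ e := le_of_lt ((Nat.pow_lt_pow_iff_right (by omega : 1 < q)).mp hlt)
      have hxc : x ^ q ^ n = (c : k) := by
        have := minpoly.aeval L x
        rw [hmin] at this
        simp only [map_sub, Polynomial.aeval_X_pow, Polynomial.aeval_X, Polynomial.aeval_C] at this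
        have hac : (algebraMap L k) c = (c : k) := rfl
        rw [hac, sub_eq_zero] at this
        exact this
      have hy : y = (c : k) ^ q ^ (e - n) := by
        rw [← hxc, ← pow_mul, ← hx]
        congr 1
        rw [← pow_add]
        congr 1
        omega
      rw [hy]
      exact pow_mem c.2 _
  have htop : L = ⊤ := by
    rw [eq_top_iff]; intro y _; exact hmem y
  apply hinf
  have : FiniteDimensional k₀ (⊤ : IntermediateField k₀ k) := htop ▸ hLfin
  exact (IntermediateField.topEquiv (F := k₀) (E := k)).toLinearEquiv.finiteDimensional

end Aux

open Polynomial in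
/-- Let `k₀` be a field and `k` an algebraically closed field such that the extension
`k/k₀` is infinite, and let `r ≥ 1`.  Equip `k₀^{2r}` with the standard symplectic form
given by `[[0, I_r], [−I_r, 0]]`.  Then there exists a maximal isotropic (Lagrangian)
`k`-subspace `W ⊆ k^{2r}` such that the only matrices with entries in `k₀` preserving `W`
are the scalar matrices. -/
theorem exists_lagrangian_with_scalar_stabilizer
    (k₀ k : Type*) [Field k₀] [Field k] [IsAlgClosed k] [Algebra k₀ k]
    (hinf : ¬ FiniteDimensional k₀ k) (r : ℕ) (hr : 1 ≤ r) :
    ∃ W : Submodule k ((Fin r ⊕ Fin r) → k),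
      Module.finrank k W = r ∧
      (∀ x ∈ W, ∀ y ∈ W,
        ∑ i : Fin r, (x (Sum.inl i) * y (Sum.inr i) - x (Sum.inr i) * y (Sum.inl i)) = 0) ∧
      {A : Matrix (Fin r ⊕ Fin r) (Fin r ⊕ Fin r) k₀ |
          ∀ x ∈ W, (A.map (algebraMap k₀ k)).mulVec x ∈ W} =
        {A : Matrix (Fin r ⊕ Fin r) (Fin r ⊕ Fin r) k₀ |
          ∃ a : k₀, A = a • (1 : Matrix (Fin r ⊕ Fin r) (Fin r ⊕ Fin r) k₀)} := by
  classical
  obtain ⟨t, ht⟩ := exists_big_element k₀ k hinf (2 * 4 ^ (r * r))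
  have hpos4 : ∀ a : ℕ, 0 < (4:ℕ) ^ a := fun a => Nat.pow_pos (by norm_num)
  -- the pairing function
  set NN : Fin r → Fin r → ℕ := fun i j => min i.1 j.1 * r + max i.1 j.1 with hNN
  have hNsym : ∀ i j, NN i j = NN j i := by
    intro i j; simp only [NN, Nat.min_comm, Nat.max_comm]
  have hNinj : ∀ {i j i' j' : Fin r}, NN i j = NN i' j' →
      min i.1 j.1 = min i'.1 j'.1 ∧ max i.1 j.1 = max i'.1 j'.1 := by
    intro i j i' j' h
    exact pair_min_max i.2 j.2 i'.2 j'.2 h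
  have hNbound : ∀ i j, 4 ^ NN i j ≤ 4 ^ (r * r) := by
    intro i j
    apply Nat.pow_le_pow_right (by norm_num)
    have hi := i.2; have hj := j.2
    have h1 : min i.1 j.1 * r ≤ (r - 1) * r := Nat.mul_le_mul_right _ (by omega)
    have h2 : (r - 1) * r + r ≤ r * r := by
      rcases r with _|m
      · omega
      · have : ((m+1) - 1) * (m+1) + (m+1) = (m+1)*(m+1) := by simp; ring
        omega
    have h3 : max i.1 j.1 < r := by omega
    apply le_of_lt
    calc NN i j = min i.1 j.1 * r + max i.1 j.1 := rfl
      _ < min i.1 j.1 * r + r := by omega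
      _ ≤ (r - 1) * r + r := by omega
      _ ≤ r * r := h2
  -- the matrix T
  set T : Fin r → Fin r → k := fun i j => t ^ (4 ^ NN i j) with hT
  have hTsym : ∀ i j, T i j = T j i := by intro i j; simp only [T, hNsym i j]
  -- the subspace W as range of the graph map
  let f : (Fin r → k) →ₗ[k] ((Fin r ⊕ Fin r) → k) :=
    { toFun := fun u => Sum.elim u (fun i => ∑ j, T i j * u j)
      map_add' := by
        intro u v; funext s
        rcases s with i | i
        · rfl
        · simp only [Sum.elim_inr, Pi.add_apply, Sum.elim_inl, mul_add]
          rw [Finset.sum_add_distrib]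
      map_smul' := by
        intro c u; funext s
        rcases s with i | i
        · rfl
        · simp only [Sum.elim_inr, Pi.smul_apply, smul_eq_mul, RingHom.id_apply]
          rw [Finset.mul_sum]
          apply Finset.sum_congr rfl
          intros; ring }
  have hf_inl : ∀ u j, f u (Sum.inl j) = u j := fun u j => rfl
  have hf_inr : ∀ u i, f u (Sum.inr i) = ∑ j, T i j * u j := fun u i => rfl
  refine ⟨LinearMap.range f, ?_, ?_, ?_⟩
  · -- finrank
    have hinj : Function.Injective f := by
      intro u v h
      funext j
      have := congrFun h (Sum.inl j)
      exact this
    rw [LinearMap.finrank_range_of_inj hinj, Module.finrank_pi]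
    simp
  · -- isotropic
    rintro x ⟨u, rfl⟩ y ⟨v, rfl⟩
    simp only [hf_inl, hf_inr]
    rw [Finset.sum_sub_distrib, sub_eq_zero]
    have h1 : ∀ i : Fin r, u i * (∑ j, T i j * v j) = ∑ j, T i j * u i * v j := by
      intro i; rw [Finset.mul_sum]; apply Finset.sum_congr rfl; intros; ring
    have h2 : ∀ i : Fin r, (∑ j, T i j * u j) * v i = ∑ j, T i j * u j * v i := by
      intro i; rw [Finset.sum_mul]
    simp_rw [h1, h2]
    rw [Finset.sum_comm]
    apply Finset.sum_congr rfl; intro i _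
    apply Finset.sum_congr rfl; intro j _
    rw [hTsym j i]
  · -- the stabilizer
    have hMem : ∀ v : (Fin r ⊕ Fin r) → k,
        v ∈ LinearMap.range f ↔ ∀ i, v (Sum.inr i) = ∑ j, T i j * v (Sum.inl j) := by
      intro v
      constructor
      · rintro ⟨u, rfl⟩ i
        simp only [hf_inl, hf_inr]
      · intro h
        refine ⟨fun j => v (Sum.inl j), ?_⟩
        funext s
        rcases s with j | i
        · rfl
        · exact (h i).symm
    ext A
    simp only [Set.mem_setOf_eq]
    constructor
    · -- stabilizing matrices are scalar
      intro hA
      -- the basic vectors of W and the resulting equations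
      have heq : ∀ (i l : Fin r),
          algebraMap k₀ k (A (Sum.inr i) (Sum.inl l))
            + ∑ m, algebraMap k₀ k (A (Sum.inr i) (Sum.inr m)) * T m l
          = ∑ j, T i j * (algebraMap k₀ k (A (Sum.inl j) (Sum.inl l))
            + ∑ m, algebraMap k₀ k (A (Sum.inl j) (Sum.inr m)) * T m l) := by
        intro i l
        have hx : f (Pi.single l 1) ∈ LinearMap.range f := ⟨_, rfl⟩
        have h := (hMem _).mp (hA _ hx) i
        have hvl : ∀ s : Fin r ⊕ Fin r,
            (A.map (algebraMap k₀ k)).mulVec (f (Pi.single l 1)) s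
            = algebraMap k₀ k (A s (Sum.inl l)) + ∑ m, algebraMap k₀ k (A s (Sum.inr m)) * T m l := by
          intro s
          rw [Matrix.mulVec, dotProduct, Fintype.sum_sum_type]
          congr 1
          · rw [Finset.sum_eq_single l]
            · simp [Matrix.map_apply, hf_inl, Pi.single_apply]
            · intro j _ hne
              simp [Matrix.map_apply, hf_inl, Pi.single_apply, hne]
            · intro hmem; exact absurd (Finset.mem_univ l) hmem
          · apply Finset.sum_congr rfl
            intro m _
            rw [Matrix.map_apply, hf_inr]
            congr 1
            rw [Finset.sum_eq_single l]
            · simp [Pi.single_apply]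
            · intro j _ hne; simp [Pi.single_apply, hne]
            · intro hmem; exact absurd (Finset.mem_univ l) hmem
        rw [hvl] at h
        rw [h]
        apply Finset.sum_congr rfl
        intro j _
        rw [hvl]
      -- the polynomial identities
      set P : Fin r → Fin r → Polynomial k₀ := fun i l =>
        C (A (Sum.inr i) (Sum.inl l))
          + ∑ m, C (A (Sum.inr i) (Sum.inr m)) * X ^ (4 ^ NN m l)
          - ∑ j, C (A (Sum.inl j) (Sum.inl l)) * X ^ (4 ^ NN i j)
          - ∑ j, ∑ m, C (A (Sum.inl j) (Sum.inr m)) * X ^ (4 ^ NN i j + 4 ^ NN m l) with hP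
      have hPdeg : ∀ i l, (P i l).natDegree ≤ 2 * 4 ^ (r * r) := by
        intro i l
        have b1 : (C (A (Sum.inr i) (Sum.inl l))).natDegree ≤ 2 * 4 ^ (r * r) := by
          simp [Polynomial.natDegree_C]
        have b2 : (∑ m, C (A (Sum.inr i) (Sum.inr m)) * X ^ (4 ^ NN m l)).natDegree
            ≤ 2 * 4 ^ (r * r) := by
          apply Polynomial.natDegree_sum_le_of_forall_le
          intro m _
          apply le_trans (Polynomial.natDegree_C_mul_le _ _)
          rw [Polynomial.natDegree_X_pow]
          have := hNbound m l; omega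
        have b3 : (∑ j, C (A (Sum.inl j) (Sum.inl l)) * X ^ (4 ^ NN i j)).natDegree
            ≤ 2 * 4 ^ (r * r) := by
          apply Polynomial.natDegree_sum_le_of_forall_le
          intro j _
          apply le_trans (Polynomial.natDegree_C_mul_le _ _)
          rw [Polynomial.natDegree_X_pow]
          have := hNbound i j; omega
        have b4 : (∑ j, ∑ m, C (A (Sum.inl j) (Sum.inr m))
            * X ^ (4 ^ NN i j + 4 ^ NN m l)).natDegree ≤ 2 * 4 ^ (r * r) := by
          apply Polynomial.natDegree_sum_le_of_forall_le
          intro j _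
          apply Polynomial.natDegree_sum_le_of_forall_le
          intro m _
          apply le_trans (Polynomial.natDegree_C_mul_le _ _)
          rw [Polynomial.natDegree_X_pow]
          have := hNbound i j; have := hNbound m l; omega
        rw [hP]
        apply le_trans (Polynomial.natDegree_sub_le _ _)
        apply max_le _ b4
        apply le_trans (Polynomial.natDegree_sub_le _ _)
        apply max_le _ b3
        exact le_trans (Polynomial.natDegree_add_le _ _) (max_le b1 b2)
      have hPaeval : ∀ i l, Polynomial.aeval t (P i l) = 0 := by
        intro i l
        rw [hP]
        simp only [map_add, map_sub, map_sum, map_mul, Polynomial.aeval_C,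
          Polynomial.aeval_X_pow, pow_add]
        have h := heq i l
        simp only [hT] at h
        rw [sub_eq_zero, sub_eq_iff_eq_add, h]
        simp only [mul_add, Finset.mul_sum, Finset.sum_add_distrib]
        rw [add_comm]
        congr 1
        · apply Finset.sum_congr rfl; intro j _
          apply Finset.sum_congr rfl; intro m _
          ring
        · apply Finset.sum_congr rfl; intro j _
          ring
      have hP0 : ∀ i l, P i l = 0 := fun i l => ht _ (hPdeg i l) (hPaeval i l)
      have hco : ∀ (i l : Fin r) (w : ℕ),
          (if w = 0 then A (Sum.inr i) (Sum.inl l) else 0)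
          + (∑ m, if w = 4 ^ NN m l then A (Sum.inr i) (Sum.inr m) else 0)
          - (∑ j, if w = 4 ^ NN i j then A (Sum.inl j) (Sum.inl l) else 0)
          - (∑ j, ∑ m, if w = 4 ^ NN i j + 4 ^ NN m l then A (Sum.inl j) (Sum.inr m) else 0)
          = 0 := by
        intro i l w
        have h := congrArg (fun p => Polynomial.coeff p w) (hP0 i l)
        simp only [hP, Polynomial.coeff_sub, Polynomial.coeff_add, Polynomial.finset_sum_coeff,
          Polynomial.coeff_C_mul, Polynomial.coeff_X_pow, Polynomial.coeff_C,
          mul_ite, mul_one, mul_zero, Polynomial.coeff_zero] at h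
        exact h
      -- extract the matrix entries
      set i₀ : Fin r := ⟨0, by omega⟩ with hi₀def
      set l₀ : Fin r := ⟨r - 1, by omega⟩ with hl₀def
      have hi0 : i₀.1 = 0 := rfl
      have hl0 : l₀.1 = r - 1 := rfl
      -- the lower-left block vanishes
      have hc : ∀ i l : Fin r, A (Sum.inr i) (Sum.inl l) = 0 := by
        intro i l
        have h := hco i l 0
        rw [if_pos rfl,
          Finset.sum_eq_zero (fun (m : Fin r) _ => if_neg
            (by have := hpos4 (NN m l); omega)),
          Finset.sum_eq_zero (fun (j : Fin r) _ => if_neg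
            (by have := hpos4 (NN i j); omega)),
          Finset.sum_eq_zero (fun (j : Fin r) _ => Finset.sum_eq_zero
            (fun (m : Fin r) _ => if_neg
              (by have := hpos4 (NN i j); have := hpos4 (NN m l); omega)))] at h
        linear_combination h
      -- the lower-right block is the transpose of the upper-left block
      have hda : ∀ i m : Fin r, A (Sum.inr i) (Sum.inr m) = A (Sum.inl m) (Sum.inl i) := by
        intro i m
        have h := hco i i (4 ^ NN m i)
        rw [if_neg (by have := hpos4 (NN m i); omega),
          Finset.sum_eq_single m
            (fun m' _ hne => if_neg (by
              intro hEq
              have g := hNinj (pow4_inj hEq)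
              exact hne (Fin.ext (by omega))))
            (fun hmem => absurd (Finset.mem_univ m) hmem),
          if_pos rfl,
          Finset.sum_eq_single m
            (fun j _ hne => if_neg (by
              intro hEq
              have g := hNinj (pow4_inj hEq)
              exact hne (Fin.ext (by omega))))
            (fun hmem => absurd (Finset.mem_univ m) hmem),
          if_pos (congrArg (4 ^ ·) (hNsym m i)),
          Finset.sum_eq_zero (fun (j : Fin r) _ => Finset.sum_eq_zero
            (fun (m' : Fin r) _ => if_neg
              (fun hEq => pow4_add_ne' (NN i j) (NN m' i) (NN m i) hEq.symm)))] at h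
        linear_combination h
      -- the upper-right block vanishes
      have hb : ∀ jj mm : Fin r, A (Sum.inl jj) (Sum.inr mm) = 0 := by
        intro jj mm
        have h := hco i₀ l₀ (4 ^ NN i₀ jj + 4 ^ NN mm l₀)
        rw [if_neg (by have := hpos4 (NN i₀ jj); have := hpos4 (NN mm l₀); omega),
          Finset.sum_eq_zero (fun (m' : Fin r) _ => if_neg
            (fun hEq => pow4_add_ne' (NN i₀ jj) (NN mm l₀) (NN m' l₀) hEq)),
          Finset.sum_eq_zero (fun (j' : Fin r) _ => if_neg
            (fun hEq => pow4_add_ne' (NN i₀ jj) (NN mm l₀) (NN i₀ j') hEq)),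
          Finset.sum_eq_single jj
            (fun j' _ hne => Finset.sum_eq_zero (fun (m' : Fin r) _ => if_neg (by
              intro hEq
              refine hne (Fin.ext ?_)
              have hj2 := jj.2; have hm2 := mm.2; have hj'2 := j'.2; have hm'2 := m'.2
              rcases pow4_add_inj' hEq with ⟨e1, e2⟩ | ⟨e1, e2⟩
              · have g1 := hNinj e1; have g2 := hNinj e2
                omega
              · have g1 := hNinj e1; have g2 := hNinj e2
                omega)))
            (fun hmem => absurd (Finset.mem_univ jj) hmem),
          Finset.sum_eq_single mm
            (fun m' _ hne => if_neg (by
              intro hEq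
              refine hne (Fin.ext ?_)
              have hj2 := jj.2; have hm2 := mm.2; have hm'2 := m'.2
              rcases pow4_add_inj' hEq with ⟨e1, e2⟩ | ⟨e1, e2⟩
              · have g1 := hNinj e1; have g2 := hNinj e2
                omega
              · have g1 := hNinj e1; have g2 := hNinj e2
                omega))
            (fun hmem => absurd (Finset.mem_univ mm) hmem),
          if_pos rfl] at h
        linear_combination -h
      -- the off-diagonal entries of the upper-left block vanish
      have ha0 : ∀ j l : Fin r, j ≠ l → A (Sum.inl j) (Sum.inl l) = 0 := by
        intro j l hjl
        have hjl' : j.1 ≠ l.1 := fun hh => hjl (Fin.ext hh)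
        have hr2 : 2 ≤ r := by have := j.2; have := l.2; omega
        obtain ⟨iv, hiv⟩ : ∃ iv : Fin r, iv.1 ≠ l.1 := by
          rcases Nat.eq_zero_or_pos l.1 with h0 | h0
          · exact ⟨⟨1, by omega⟩, show (1:ℕ) ≠ l.1 by omega⟩
          · exact ⟨⟨0, by omega⟩, show (0:ℕ) ≠ l.1 by omega⟩
        have h := hco iv l (4 ^ NN iv j)
        rw [if_neg (by have := hpos4 (NN iv j); omega),
          Finset.sum_eq_zero (fun (m' : Fin r) _ => if_neg (by
            intro hEq
            have g := hNinj (pow4_inj hEq)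
            omega)),
          Finset.sum_eq_single j
            (fun j' _ hne => if_neg (by
              intro hEq
              have g := hNinj (pow4_inj hEq)
              exact hne (Fin.ext (by omega))))
            (fun hmem => absurd (Finset.mem_univ j) hmem),
          if_pos rfl,
          Finset.sum_eq_zero (fun (j' : Fin r) _ => Finset.sum_eq_zero
            (fun (m' : Fin r) _ => if_neg
              (fun hEq => pow4_add_ne' (NN iv j') (NN m' l) (NN iv j) hEq.symm)))] at h
        linear_combination -h
      -- the diagonal relation
      have hdiag : ∀ i l : Fin r, i ≠ l →
          A (Sum.inr i) (Sum.inr i) = A (Sum.inl l) (Sum.inl l) := by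
        intro i l hil
        have hil' : i.1 ≠ l.1 := fun hh => hil (Fin.ext hh)
        have h := hco i l (4 ^ NN i l)
        rw [if_neg (by have := hpos4 (NN i l); omega),
          Finset.sum_eq_single i
            (fun m' _ hne => if_neg (by
              intro hEq
              have g := hNinj (pow4_inj hEq)
              exact hne (Fin.ext (by omega))))
            (fun hmem => absurd (Finset.mem_univ i) hmem),
          if_pos rfl,
          Finset.sum_eq_single l
            (fun j' _ hne => if_neg (by
              intro hEq
              have g := hNinj (pow4_inj hEq)
              exact hne (Fin.ext (by omega))))
            (fun hmem => absurd (Finset.mem_univ l) hmem),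
          if_pos rfl,
          Finset.sum_eq_zero (fun (j' : Fin r) _ => Finset.sum_eq_zero
            (fun (m' : Fin r) _ => if_neg
              (fun hEq => pow4_add_ne' (NN i j') (NN m' l) (NN i l) hEq.symm)))] at h
        linear_combination h
      -- all diagonal entries of the upper-left block agree
      have hdall : ∀ j : Fin r, A (Sum.inl j) (Sum.inl j) = A (Sum.inl i₀) (Sum.inl i₀) := by
        intro j
        by_cases hji : j = i₀
        · rw [hji]
        · rw [← hda j j, hdiag j i₀ hji]
      refine ⟨A (Sum.inl i₀) (Sum.inl i₀), ?_⟩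
      ext s s'
      rcases s with j | i <;> rcases s' with l | m
      · by_cases hjl : j = l
        · subst hjl
          rw [hdall j]
          simp [Matrix.one_apply]
        · rw [ha0 j l hjl]
          simp [Matrix.one_apply, hjl]
      · rw [hb j m]
        simp [Matrix.one_apply]
      · rw [hc i l]
        simp [Matrix.one_apply]
      · by_cases him : i = m
        · subst him
          rw [hda i i, hdall i]
          simp [Matrix.one_apply]
        · rw [hda i m, ha0 m i (fun hh => him hh.symm)]
          simp [Matrix.one_apply, him]
    · -- scalar matrices stabilize
      rintro ⟨a, rfl⟩ x hx
      have hmat : (a • (1 : Matrix (Fin r ⊕ Fin r) (Fin r ⊕ Fin r) k₀)).map (algebraMap k₀ k)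
          = (algebraMap k₀ k a) • (1 : Matrix (Fin r ⊕ Fin r) (Fin r ⊕ Fin r) k) := by
        ext s s'
        by_cases hss : s = s' <;> simp [Matrix.map_apply, Matrix.one_apply, hss]
      rw [hmat, Matrix.smul_mulVec, Matrix.one_mulVec]
      exact Submodule.smul_mem _ _ hx
end
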